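/- arXiv:0810.2207 — 5 statements merged into one kernel-verified Lean document; each statement's English description precedes it below -/
import Mathlib

section
/- Let Q be an IP-polygon of order o_Q = I and let F be a facet of Q with local index l_F. Then the number of lattice points on F satisfies |F ∩ ℤ²| ≤ 2I(l_F + 1) + 1. -/
open Pointwise

/-- The embedding of the lattice `ℤ²` into `ℚ²`. -/
def toQ (p : ℤ × ℤ) : ℚ × ℚ := ((p.1 : ℚ), (p.2 : ℚ))

/-- The pairing between the dual lattice `ℤ²` and `ℚ²`. -/
def pairQ (η : ℤ × ℤ) (x : ℚ × ℚ) : ℚ := (η.1 : ℚ) * x.1 + (η.2 : ℚ) * x.2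

/-- A lattice polygon: the convex hull of finitely many lattice points,
with nonempty interior. -/
def IsLatticePolygon (Q : Set (ℚ × ℚ)) : Prop :=
  (∃ S : Finset (ℤ × ℤ), Q = convexHull ℚ (toQ '' (S : Set (ℤ × ℤ)))) ∧
    (interior Q).Nonempty

/-- An IP-polygon: a lattice polygon containing the origin in its interior. -/
def IsIPPolygon (Q : Set (ℚ × ℚ)) : Prop :=
  IsLatticePolygon Q ∧ (0 : ℚ × ℚ) ∈ interior Q

/-- The vertices of a polygon are its extreme points. -/
def vertices (Q : Set (ℚ × ℚ)) : Set (ℚ × ℚ) := Set.extremePoints ℚ Q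

/-- An LDP-polygon: an IP-polygon all of whose vertices are primitive lattice points. -/
def IsLDPPolygon (Q : Set (ℚ × ℚ)) : Prop :=
  IsIPPolygon Q ∧ ∀ v ∈ vertices Q, ∃ p : ℤ × ℤ, Int.gcd p.1 p.2 = 1 ∧ v = toQ p

/-- `IsFacetWith Q η l F` : `F` is a facet (edge) of `Q` with primitive outer normal
`η` and local index `l`, i.e. `⟨η, x⟩ = l` on `F` and `⟨η, y⟩ ≤ l` on `Q`. -/
def IsFacetWith (Q : Set (ℚ × ℚ)) (η : ℤ × ℤ) (l : ℤ) (F : Set (ℚ × ℚ)) : Prop :=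
  Int.gcd η.1 η.2 = 1 ∧ 0 < l ∧
  (∀ y ∈ Q, pairQ η y ≤ (l : ℚ)) ∧
  F = {x ∈ Q | pairQ η x = (l : ℚ)} ∧
  ∃ x ∈ F, ∃ y ∈ F, x ≠ y

/-- `F` is a facet of `Q`. -/
def IsFacet (Q F : Set (ℚ × ℚ)) : Prop := ∃ η l, IsFacetWith Q η l F

/-- `HasMaxLocalIndex Q k` : the maximal local index `m_Q` of `Q` equals `k`. -/
def HasMaxLocalIndex (Q : Set (ℚ × ℚ)) (k : ℤ) : Prop :=
  (∃ F η, IsFacetWith Q η k F) ∧ ∀ F η l, IsFacetWith Q η l F → l ≤ k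

/-- `HasIndex Q ℓ` : the index `ℓ_Q` of `Q` (the lcm of all local indices) equals `ℓ`. -/
def HasIndex (Q : Set (ℚ × ℚ)) (ℓ : ℤ) : Prop :=
  0 < ℓ ∧ (∀ F η l, IsFacetWith Q η l F → l ∣ ℓ) ∧
  ∀ m : ℤ, 0 < m → (∀ F η l, IsFacetWith Q η l F → l ∣ m) → ℓ ∣ m

/-- The only lattice point in the interior of `(1/k)·Q` is the origin. -/
def NoIntLatticePts (Q : Set (ℚ × ℚ)) (k : ℤ) : Prop :=
  ∀ p : ℤ × ℤ, toQ p ∈ interior (((k : ℚ)⁻¹) • Q) → p = 0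

/-- `HasOrder Q I` : the order `o_Q` of `Q` equals `I`. -/
def HasOrder (Q : Set (ℚ × ℚ)) (I : ℤ) : Prop :=
  1 ≤ I ∧ NoIntLatticePts Q I ∧ ∀ k : ℤ, 1 ≤ k → NoIntLatticePts Q k → I ≤ k

/-- The cone `pos(F) = ℝ≥0·F` spanned by `F` (inside `ℚ²`). -/
def posCone (F : Set (ℚ × ℚ)) : Set (ℚ × ℚ) :=
  {y | ∃ t : ℚ, 0 ≤ t ∧ ∃ z ∈ F, y = t • z}

/-- The number of lattice points in a subset of `ℚ²`. -/
noncomputable def latticeCount (S : Set (ℚ × ℚ)) : ℕ :=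
  {p : ℤ × ℤ | toQ p ∈ S}.ncard

/-- The normalised volume of `Q`: twice the Euclidean area of the corresponding
real region. -/
noncomputable def nVol (Q : Set (ℚ × ℚ)) : ℝ :=
  2 * (MeasureTheory.volume
    (closure ((fun x : ℚ × ℚ => ((x.1 : ℝ), (x.2 : ℝ))) '' Q))).toReal

/-- Unimodular equivalence: `Q'` is the image of `Q` under an element of `GL(2,ℤ)`. -/
def UnimodEquiv (Q Q' : Set (ℚ × ℚ)) : Prop :=
  ∃ a b c d : ℤ, (a * d - b * c = 1 ∨ a * d - b * c = -1) ∧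
    (fun x : ℚ × ℚ => ((a : ℚ) * x.1 + (b : ℚ) * x.2,
      (c : ℚ) * x.1 + (d : ℚ) * x.2)) '' Q = Q'

lemma pairQ_linear (η : ℤ × ℤ) : IsLinearMap ℚ (pairQ η) := by
  constructor
  · intro x y
    simp only [pairQ, Prod.fst_add, Prod.snd_add]
    ring
  · intro c x
    simp only [pairQ, Prod.smul_fst, Prod.smul_snd, smul_eq_mul]
    ring

lemma int_kernel (η : ℤ × ℤ) (hg : Int.gcd η.1 η.2 = 1) (x y : ℤ)
    (h : η.1 * x + η.2 * y = 0) : ∃ c : ℤ, x = -η.2 * c ∧ y = η.1 * c := by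
  have hcop : IsCoprime η.1 η.2 := Int.isCoprime_iff_gcd_eq_one.mpr hg
  have hdvd : η.1 ∣ y := by
    refine hcop.dvd_of_dvd_mul_left ⟨-x, ?_⟩
    linarith
  obtain ⟨c, hc⟩ := hdvd
  by_cases h1 : η.1 = 0
  · have hη2 : η.2 = 1 ∨ η.2 = -1 := by
      have h2 : η.2.natAbs = 1 := by simpa [h1, Int.gcd] using hg
      omega
    refine ⟨-η.2 * x, ?_, ?_⟩ <;> rcases hη2 with h2 | h2 <;>
      simp [h1, h2] at h ⊢ <;> omega
  · refine ⟨c, ?_, hc⟩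
    have : η.1 * x = η.1 * (-η.2 * c) := by
      rw [hc] at h
      linear_combination h
    exact mul_left_cancel₀ h1 this

lemma rat_kernel (η : ℤ × ℤ) (hg : Int.gcd η.1 η.2 = 1) (w : ℚ × ℚ)
    (h : pairQ η w = 0) : ∃ t : ℚ, w.1 = t * (-(η.2:ℚ)) ∧ w.2 = t * (η.1:ℚ) := by
  simp only [pairQ] at h
  by_cases h1 : (η.1 : ℚ) = 0
  · have h1' : η.1 = 0 := by exact_mod_cast h1
    have h2' : η.2 ≠ 0 := by
      intro h2
      simp [h1', h2, Int.gcd] at hg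
    have h2 : (η.2 : ℚ) ≠ 0 := by exact_mod_cast h2'
    have hw2 : w.2 = 0 := by
      field_simp [h1] at h
      rw [h1, zero_mul, zero_add] at h
      exact (mul_eq_zero.mp h).resolve_left h2
    exact ⟨w.1 / (-(η.2:ℚ)), by field_simp, by simp [hw2, h1]⟩
  · refine ⟨w.2 / (η.1:ℚ), ?_, by field_simp⟩
    field_simp
    linear_combination h

lemma eta_cast_ne (η : ℤ × ℤ) (hgcd : Int.gcd η.1 η.2 = 1) :
    (η.1:ℚ) ≠ 0 ∨ (η.2:ℚ) ≠ 0 := by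
  by_contra hz
  push_neg at hz
  have ha : η.1 = 0 := by exact_mod_cast hz.1
  have hb : η.2 = 0 := by exact_mod_cast hz.2
  simp [ha, hb, Int.gcd] at hgcd

lemma exists_neg_pt (S : Finset (ℤ × ℤ)) (Q : Set (ℚ × ℚ))
    (hQS : Q = convexHull ℚ (toQ '' (S : Set (ℤ × ℤ))))
    (h0 : (0 : ℚ × ℚ) ∈ interior Q) (η : ℤ × ℤ) (hgcd : Int.gcd η.1 η.2 = 1) :
    ∃ p ∈ S, η.1 * p.1 + η.2 * p.2 ≤ -1 := by
  by_contra hcon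
  push_neg at hcon
  have hsub : Q ⊆ {x | 0 ≤ pairQ η x} := by
    rw [hQS]
    apply convexHull_min _ (convex_halfSpace_ge (pairQ_linear η) 0)
    rintro x ⟨p, hp, rfl⟩
    have h1 : (0 : ℤ) ≤ η.1 * p.1 + η.2 * p.2 := by
      have := hcon p (by exact_mod_cast hp)
      omega
    simp only [Set.mem_setOf_eq, pairQ, toQ]
    exact_mod_cast h1
  set f : ℚ → ℚ × ℚ := fun ε => (ε * -(η.1 : ℚ), ε * -(η.2 : ℚ)) with hf
  have hcont : Continuous f := by fun_prop
  have hmem : f ⁻¹' (interior Q) ∈ nhds (0 : ℚ) := by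
    apply hcont.continuousAt.preimage_mem_nhds
    have : f 0 = 0 := by simp [hf, Prod.ext_iff]
    rw [this]
    exact isOpen_interior.mem_nhds h0
  obtain ⟨lo, hi, hin, hsub2⟩ := mem_nhds_iff_exists_Ioo_subset.mp hmem
  have hε : f (hi / 2) ∈ interior Q := by
    apply hsub2
    constructor
    · calc lo < 0 := hin.1
        _ < hi / 2 := by linarith [hin.2]
    · linarith [hin.2]
  have h1 : 0 ≤ pairQ η (f (hi / 2)) := hsub (interior_subset hε)
  have h2 : pairQ η (f (hi / 2)) = -(hi / 2) * ((η.1 : ℚ)^2 + (η.2 : ℚ)^2) := by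
    simp only [pairQ, hf]
    ring
  have hηnz : 0 < (η.1 : ℚ)^2 + (η.2 : ℚ)^2 := by
    rcases eta_cast_ne η hgcd with h | h
    · exact add_pos_of_pos_of_nonneg ((sq_nonneg _).lt_of_ne (Ne.symm (pow_ne_zero 2 h))) (sq_nonneg _)
    · exact add_pos_of_nonneg_of_pos (sq_nonneg _) ((sq_nonneg _).lt_of_ne (Ne.symm (pow_ne_zero 2 h)))
  have hhi : (0:ℚ) < hi := hin.2
  nlinarith [h1, h2, mul_pos (by linarith : (0:ℚ) < hi/2) hηnz]

/-- If `Q` is an IP-polygon of order `I` and `F` is a facet of `Q` with local index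
`l`, then `|F ∩ ℤ²| ≤ 2I(l + 1) + 1`. -/
theorem facet_lattice_points_bound_by_order
    (Q : Set (ℚ × ℚ)) (F : Set (ℚ × ℚ)) (η : ℤ × ℤ) (I l : ℤ)
    (hQ : IsIPPolygon Q) (hI : HasOrder Q I) (hF : IsFacetWith Q η l F) :
    (latticeCount F : ℤ) ≤ 2 * I * (l + 1) + 1 := by
  obtain ⟨hgcd, hl, hQle, hFeq, -⟩ := hF
  obtain ⟨⟨⟨S, hQS⟩, -⟩, h0⟩ := hQ
  obtain ⟨hI1, hIno, -⟩ := hI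
  by_contra hcon
  push_neg at hcon
  set T : Set (ℤ × ℤ) := {p | toQ p ∈ F} with hTdef
  have hmT : latticeCount F = T.ncard := rfl
  rw [hmT] at hcon
  have hRHS : (5:ℤ) ≤ 2 * I * (l + 1) + 1 := by nlinarith
  have h5 : (5:ℤ) < (T.ncard : ℤ) := lt_of_le_of_lt hRHS hcon
  have hncne : T.ncard ≠ 0 := by omega
  have hfin : T.Finite := Set.finite_of_ncard_ne_zero hncne
  have hTne : T.Nonempty := Set.nonempty_of_ncard_ne_zero hncne
  have hQconv : Convex ℚ Q := by rw [hQS]; exact convex_convexHull ℚ _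
  have hFQ : F ⊆ Q := by rw [hFeq]; exact fun x hx => hx.1
  have hheight : ∀ p ∈ T, η.1 * p.1 + η.2 * p.2 = l := by
    intro p hp
    have hp' : toQ p ∈ F := hp
    rw [hFeq] at hp'
    have h := hp'.2
    simp only [pairQ, toQ] at h
    exact_mod_cast h
  -- Bezout
  set a := Int.gcdA η.1 η.2 with ha
  set b := Int.gcdB η.1 η.2 with hb
  have bez : η.1 * a + η.2 * b = 1 := by
    have h := Int.gcd_eq_gcd_ab η.1 η.2
    rw [hgcd] at h
    exact_mod_cast h.symm
  set ψ : ℤ × ℤ → ℤ := fun p => -b * p.1 + a * p.2 with hψ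
  have hdiff : ∀ p ∈ T, ∀ q ∈ T,
      p.1 - q.1 = -η.2 * (ψ p - ψ q) ∧ p.2 - q.2 = η.1 * (ψ p - ψ q) := by
    intro p hp q hq
    have h1 := hheight p hp
    have h2 := hheight q hq
    obtain ⟨c, hc1, hc2⟩ := int_kernel η hgcd (p.1 - q.1) (p.2 - q.2) (by linear_combination h1 - h2)
    have hcψ : ψ p - ψ q = c := by
      simp only [hψ]
      linear_combination (-b) * hc1 + a * hc2 + c * bez
    rw [hcψ]
    exact ⟨hc1, hc2⟩
  have hinj : Set.InjOn ψ T := by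
    intro p hp q hq hpq
    have h := hdiff p hp q hq
    rw [hpq, sub_self, mul_zero, mul_zero] at h
    exact Prod.ext_iff.mpr ⟨by omega, by omega⟩
  obtain ⟨u, huT, humin⟩ := Set.exists_min_image T ψ hfin hTne
  obtain ⟨v, hvT, hvmax⟩ := Set.exists_max_image T ψ hfin hTne
  have hcard : T.ncard ≤ (ψ v + 1 - ψ u).toNat := by
    have e1 : (ψ '' T).ncard = T.ncard := Set.ncard_image_of_injOn hinj
    have himg : ψ '' T ⊆ Set.Icc (ψ u) (ψ v) := by
      rintro z ⟨p, hp, rfl⟩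
      exact ⟨humin p hp, hvmax p hp⟩
    have e2 : (ψ '' T).ncard ≤ (Set.Icc (ψ u) (ψ v)).ncard :=
      Set.ncard_le_ncard himg (Set.finite_Icc _ _)
    have e3 : (Set.Icc (ψ u) (ψ v)).ncard = (ψ v + 1 - ψ u).toNat := by
      rw [← Finset.coe_Icc, Set.ncard_coe_finset, Int.card_Icc]
    omega
  set c : ℤ := ψ v - ψ u with hcdef
  have hnc : (T.ncard : ℤ) ≤ c + 1 := by omega
  have hcge : 2 * I * (l + 1) + 1 ≤ c := by
    have h' := lt_of_lt_of_le hcon hnc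
    linarith [Int.add_one_le_iff.mpr h']
  -- point at negative height
  obtain ⟨y, hyS, hyneg⟩ := exists_neg_pt S Q hQS h0 η hgcd
  set g : ℤ := -(η.1 * y.1 + η.2 * y.2) with hgdef
  have hg1 : 1 ≤ g := by omega
  have hyQ : toQ y ∈ Q := by
    rw [hQS]
    exact subset_convexHull ℚ _ ⟨y, by exact_mod_cast hyS, rfl⟩
  have hvQ : toQ v ∈ Q := hFQ hvT
  have huQ : toQ u ∈ Q := hFQ huT
  have hglq : (0:ℚ) < (g:ℚ) + (l:ℚ) := by
    have : (0:ℤ) < g + l := by omega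
    exact_mod_cast this
  set lam : ℚ := (g:ℚ) / ((g:ℚ) + (l:ℚ)) with hlamdef
  set mu : ℚ := (l:ℚ) / ((g:ℚ) + (l:ℚ)) with hmudef
  have hlam0 : 0 ≤ lam := by
    apply div_nonneg _ hglq.le
    exact_mod_cast (by omega : (0:ℤ) ≤ g)
  have hmu0 : 0 ≤ mu := by
    apply div_nonneg _ hglq.le
    exact_mod_cast hl.le
  have hsum : lam + mu = 1 := by
    rw [hlamdef, hmudef]
    field_simp
  set wv : ℚ × ℚ := lam • toQ v + mu • toQ y with hwvdef
  set wu : ℚ × ℚ := lam • toQ u + mu • toQ y with hwudef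
  have hwvQ : wv ∈ Q := hQconv hvQ hyQ hlam0 hmu0 hsum
  have hwuQ : wu ∈ Q := hQconv huQ hyQ hlam0 hmu0 hsum
  have hpv : pairQ η (toQ v) = (l:ℚ) := by
    simp only [pairQ, toQ]
    exact_mod_cast hheight v hvT
  have hpu : pairQ η (toQ u) = (l:ℚ) := by
    simp only [pairQ, toQ]
    exact_mod_cast hheight u huT
  have hpy : pairQ η (toQ y) = -(g:ℚ) := by
    simp only [pairQ, toQ]
    have : η.1 * y.1 + η.2 * y.2 = -g := by omega
    exact_mod_cast this
  have hwv0 : pairQ η wv = 0 := by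
    rw [hwvdef, (pairQ_linear η).map_add, (pairQ_linear η).map_smul,
      (pairQ_linear η).map_smul, hpv, hpy, smul_eq_mul, smul_eq_mul,
      hlamdef, hmudef]
    field_simp
    ring
  have hwu0 : pairQ η wu = 0 := by
    rw [hwudef, (pairQ_linear η).map_add, (pairQ_linear η).map_smul,
      (pairQ_linear η).map_smul, hpu, hpy, smul_eq_mul, smul_eq_mul,
      hlamdef, hmudef]
    field_simp
    ring
  obtain ⟨γ, hγ1, hγ2⟩ := rat_kernel η hgcd wv hwv0
  obtain ⟨β, hβ1, hβ2⟩ := rat_kernel η hgcd wu hwu0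
  have hd := hdiff v hvT u huT
  have hdc1 : (v.1:ℚ) - (u.1:ℚ) = -(η.2:ℚ) * (c:ℚ) := by
    have h := hd.1
    rw [← hcdef] at h
    exact_mod_cast h
  have hdc2 : (v.2:ℚ) - (u.2:ℚ) = (η.1:ℚ) * (c:ℚ) := by
    have h := hd.2
    rw [← hcdef] at h
    exact_mod_cast h
  have ev1 : wv.1 = lam * (v.1:ℚ) + mu * (y.1:ℚ) := by
    simp [hwvdef, toQ, Prod.smul_fst, Prod.fst_add, smul_eq_mul]
  have ev2 : wv.2 = lam * (v.2:ℚ) + mu * (y.2:ℚ) := by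
    simp [hwvdef, toQ, Prod.smul_snd, Prod.snd_add, smul_eq_mul]
  have eu1 : wu.1 = lam * (u.1:ℚ) + mu * (y.1:ℚ) := by
    simp [hwudef, toQ, Prod.smul_fst, Prod.fst_add, smul_eq_mul]
  have eu2 : wu.2 = lam * (u.2:ℚ) + mu * (y.2:ℚ) := by
    simp [hwudef, toQ, Prod.smul_snd, Prod.snd_add, smul_eq_mul]
  have hγβ : γ - β = lam * (c:ℚ) := by
    rcases eta_cast_ne η hgcd with hne | hne
    · have k2 : (γ - β) * (η.1:ℚ) = (lam * (c:ℚ)) * (η.1:ℚ) := by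
        linear_combination (-1) * hγ2 + ev2 + hβ2 - eu2 + lam * hdc2
      exact mul_right_cancel₀ hne k2
    · have k1 : (γ - β) * (-(η.2:ℚ)) = (lam * (c:ℚ)) * (-(η.2:ℚ)) := by
        linear_combination (-1) * hγ1 + ev1 + hβ1 - eu1 + lam * hdc1
      exact mul_right_cancel₀ (neg_ne_zero.mpr hne) k1
  have hZbig : 2 * I * (g + l) < g * c := by
    nlinarith [mul_le_mul_of_nonneg_left hcge (by omega : (0:ℤ) ≤ g),
      mul_nonneg (mul_nonneg (by omega : (0:ℤ) ≤ 2*I) hl.le) (by omega : (0:ℤ) ≤ g - 1)]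
  have hbig : 2 * (I:ℚ) < γ - β := by
    rw [hγβ, hlamdef, div_mul_eq_mul_div, lt_div_iff₀ hglq]
    exact_mod_cast hZbig
  have hIpos : (0:ℚ) < (I:ℚ) := by exact_mod_cast lt_of_lt_of_le one_pos hI1
  have hInz : (I:ℚ) ≠ 0 := hIpos.ne'
  have final : ∀ p : ℤ × ℤ, (I:ℚ) • toQ p ∈ interior Q → p = 0 := by
    intro p hp
    apply hIno p
    rw [interior_smul₀ (inv_ne_zero hInz),
      Set.mem_smul_set_iff_inv_smul_mem₀ (inv_ne_zero hInz), inv_inv]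
    exact hp
  rcases lt_or_ge (I:ℚ) γ with hγI | hγI
  · -- γ > I : use direction (-η.2, η.1)
    set t : ℚ := (I:ℚ) / γ with htdef
    have hγpos : (0:ℚ) < γ := lt_trans hIpos hγI
    have ht0 : 0 < t := div_pos hIpos hγpos
    have ht1 : t < 1 := (div_lt_one hγpos).mpr hγI
    have hmemint : (1 - t) • (0:ℚ × ℚ) + t • wv ∈ interior Q :=
      hQconv.combo_interior_self_mem_interior h0 hwvQ (by linarith) ht0.le (by ring)
    rw [smul_zero, zero_add] at hmemint
    have heq : t • wv = (I:ℚ) • toQ (-η.2, η.1) := by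
      apply Prod.ext_iff.mpr
      constructor
      · show t * wv.1 = (I:ℚ) * ((-η.2 : ℤ):ℚ)
        rw [hγ1, htdef]
        push_cast
        field_simp
      · show t * wv.2 = (I:ℚ) * ((η.1 : ℤ):ℚ)
        rw [hγ2, htdef]
        field_simp
    rw [heq] at hmemint
    have hz := final _ hmemint
    rw [Prod.ext_iff] at hz
    have h1 : η.1 = 0 := hz.2
    have h2 : η.2 = 0 := by have := hz.1; simpa using this
    simp [h1, h2, Int.gcd] at hgcd
  · -- β < -I : use direction (η.2, -η.1)
    have hβneg : β < -(I:ℚ) := by linarith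
    set t : ℚ := (I:ℚ) / (-β) with htdef
    have hβpos : (0:ℚ) < -β := by linarith
    have ht0 : 0 < t := div_pos hIpos hβpos
    have ht1 : t < 1 := (div_lt_one hβpos).mpr (by linarith)
    have hmemint : (1 - t) • (0:ℚ × ℚ) + t • wu ∈ interior Q :=
      hQconv.combo_interior_self_mem_interior h0 hwuQ (by linarith) ht0.le (by ring)
    rw [smul_zero, zero_add] at hmemint
    have hβnz : β ≠ 0 := by linarith
    have heq : t • wu = (I:ℚ) • toQ (η.2, -η.1) := by
      apply Prod.ext_iff.mpr
      constructor
      · show t * wu.1 = (I:ℚ) * ((η.2 : ℤ):ℚ)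
        rw [hβ1, htdef]
        field_simp
      · show t * wu.2 = (I:ℚ) * ((-η.1 : ℤ):ℚ)
        rw [hβ2, htdef]
        push_cast
        field_simp
    rw [heq] at hmemint
    have hz := final _ hmemint
    rw [Prod.ext_iff] at hz
    have h2 : η.2 = 0 := hz.1
    have h1 : η.1 = 0 := by have := hz.2; simpa using this
    simp [h1, h2, Int.gcd] at hgcd
end

section
/- Let Q be an IP-polygon of order o_Q = I and let F be a facet of Q with local index l_F. If |F ∩ ℤ²| = 2I(l_F + 1) + 1, then l_F ≤ I and Q is unimodularly equivalent to the triangle with vertices (−I(l_F+1), l_F), (I(l_F+1), l_F), and (0, −1). -/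
open Pointwise

section AuxProof

def mk2 (A B C D : ℤ) : (ℚ × ℚ) →ₗ[ℚ] (ℚ × ℚ) where
  toFun x := ((A : ℚ) * x.1 + (B : ℚ) * x.2, (C : ℚ) * x.1 + (D : ℚ) * x.2)
  map_add' x y := by simp [Prod.ext_iff]; constructor <;> ring
  map_smul' r x := by simp [Prod.ext_iff, Prod.smul_fst, Prod.smul_snd, smul_eq_mul]; constructor <;> ring

lemma mk2_apply (A B C D : ℤ) (x : ℚ × ℚ) :
    mk2 A B C D x = ((A : ℚ) * x.1 + (B : ℚ) * x.2, (C : ℚ) * x.1 + (D : ℚ) * x.2) := rfl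

lemma mk2_cont (A B C D : ℤ) : Continuous (mk2 A B C D) := by
  simp only [mk2, LinearMap.coe_mk, AddHom.coe_mk]
  fun_prop

lemma mk2_inv_apply (A B C D : ℤ) (h : A * D - B * C = 1) (x : ℚ × ℚ) :
    mk2 D (-B) (-C) A (mk2 A B C D x) = x := by
  have h' : (A : ℚ) * D - B * C = 1 := by exact_mod_cast h
  simp only [mk2_apply, Prod.ext_iff, Int.cast_neg]
  constructor
  · linear_combination x.1 * h'
  · linear_combination x.2 * h'

/-- The homeomorphism of ℚ² given by a det-1 integer matrix. -/
def homeo2 (A B C D : ℤ) (h : A * D - B * C = 1) : (ℚ × ℚ) ≃ₜ (ℚ × ℚ) where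
  toFun := mk2 A B C D
  invFun := mk2 D (-B) (-C) A
  left_inv x := mk2_inv_apply A B C D h x
  right_inv x := by
    have h2 : D * A - (-B) * (-C) = 1 := by linarith [h]
    have := mk2_inv_apply D (-B) (-C) A h2 x
    simpa using this
  continuous_toFun := mk2_cont A B C D
  continuous_invFun := mk2_cont D (-B) (-C) A

lemma homeo2_coe (A B C D : ℤ) (h : A * D - B * C = 1) :
    ⇑(homeo2 A B C D h) = ⇑(mk2 A B C D) := rfl

lemma mk2_image_interior (A B C D : ℤ) (h : A * D - B * C = 1) (s : Set (ℚ × ℚ)) :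
    (mk2 A B C D) '' interior s = interior ((mk2 A B C D) '' s) :=
  (homeo2 A B C D h).image_interior s

/-- Integer version of the matrix action. -/
def mk2Z (A B C D : ℤ) (p : ℤ × ℤ) : ℤ × ℤ := (A * p.1 + B * p.2, C * p.1 + D * p.2)

lemma mk2_toQ (A B C D : ℤ) (p : ℤ × ℤ) : mk2 A B C D (toQ p) = toQ (mk2Z A B C D p) := by
  simp [mk2_apply, toQ, mk2Z]

lemma mk2Z_inv_apply (A B C D : ℤ) (h : A * D - B * C = 1) (p : ℤ × ℤ) :
    mk2Z D (-B) (-C) A (mk2Z A B C D p) = p := by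
  simp only [mk2Z, Prod.ext_iff]
  constructor
  · linear_combination p.1 * h
  · linear_combination p.2 * h

lemma mk2Z_inj (A B C D : ℤ) (h : A * D - B * C = 1) : Function.Injective (mk2Z A B C D) := by
  intro p q hpq
  have := congrArg (mk2Z D (-B) (-C) A) hpq
  rwa [mk2Z_inv_apply A B C D h, mk2Z_inv_apply A B C D h] at this


lemma exists_ab (Q F : Set (ℚ × ℚ)) (l : ℤ) (N : ℤ)
    (hFdef : F = {x ∈ Q | x.2 = (l : ℚ)}) (hQconv : Convex ℚ Q)
    (hcount : (latticeCount F : ℤ) = N) (hN : 0 < N) :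
    ∃ a b : ℤ, ((a : ℚ), (l : ℚ)) ∈ F ∧ ((b : ℚ), (l : ℚ)) ∈ F ∧ b - a = N - 1 := by
  have hFconv : Convex ℚ F := by
    rw [hFdef]
    intro x hx y hy s t hs ht hst
    refine ⟨hQconv hx.1 hy.1 hs ht hst, ?_⟩
    have : (s • x + t • y).2 = s * x.2 + t * y.2 := rfl
    rw [this, hx.2, hy.2]
    linear_combination (l : ℚ) * hst
  set A : Set ℤ := {m : ℤ | ((m : ℚ), (l : ℚ)) ∈ F} with hA
  have hinj : Function.Injective (fun m : ℤ => ((m, l) : ℤ × ℤ)) := by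
    intro m n h; simpa using congrArg Prod.fst h
  have hset : {p : ℤ × ℤ | toQ p ∈ F} = (fun m : ℤ => ((m, l) : ℤ × ℤ)) '' A := by
    ext p
    simp only [Set.mem_setOf_eq, Set.mem_image]
    constructor
    · intro hp
      have h2 : (p.2 : ℚ) = l := by
        rw [hFdef] at hp; exact hp.2
      have h2' : p.2 = l := by exact_mod_cast h2
      refine ⟨p.1, ?_, ?_⟩
      · show ((p.1 : ℚ), (l : ℚ)) ∈ F
        have : toQ p = ((p.1 : ℚ), (l : ℚ)) := by
          simp [toQ, h2']
        rwa [this] at hp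
      · ext <;> simp [h2']
    · rintro ⟨m, hm, rfl⟩
      exact hm
  have hcardA : (A.ncard : ℤ) = N := by
    rw [← hcount, latticeCount, hset, Set.ncard_image_of_injective _ hinj]
  have hA0 : A.ncard ≠ 0 := by
    intro h; rw [h] at hcardA; omega
  have hAfin : A.Finite := by
    by_contra h
    rw [Set.Infinite.ncard (by exact h)] at hA0
    exact hA0 rfl
  have hAne : A.Nonempty := Set.nonempty_of_ncard_ne_zero hA0
  have hAfne : hAfin.toFinset.Nonempty := by
    rwa [Set.Finite.toFinset_nonempty]
  set a := hAfin.toFinset.min' hAfne with hadef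
  set b := hAfin.toFinset.max' hAfne with hbdef
  have haA : a ∈ A := by
    have := hAfin.toFinset.min'_mem hAfne
    rwa [Set.Finite.mem_toFinset] at this
  have hbA : b ∈ A := by
    have := hAfin.toFinset.max'_mem hAfne
    rwa [Set.Finite.mem_toFinset] at this
  have hbound : ∀ m ∈ A, a ≤ m ∧ m ≤ b := by
    intro m hm
    rw [← Set.Finite.mem_toFinset hAfin] at hm
    exact ⟨hAfin.toFinset.min'_le m hm, hAfin.toFinset.le_max' m hm⟩
  have hord : ∀ m : ℤ, a ≤ m → m ≤ b → m ∈ A := by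
    intro m h1 h2
    rcases eq_or_lt_of_le (h1.trans h2 : a ≤ b) with heq | hlt
    · -- a = b, so m = a
      have : m = a := le_antisymm (heq ▸ h2) h1
      rwa [this]
    · set t : ℚ := ((b : ℚ) - m) / ((b : ℚ) - a) with htdef
      have hden : (0 : ℚ) < (b : ℚ) - a := by
        have : (a : ℚ) < b := by exact_mod_cast hlt
        linarith
      have ht0 : 0 ≤ t := by
        apply div_nonneg _ hden.le
        have : (m : ℚ) ≤ b := by exact_mod_cast h2
        linarith
      have ht1 : 0 ≤ 1 - t := by
        rw [htdef]
        rw [sub_nonneg, div_le_one hden]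
        have : (a : ℚ) ≤ m := by exact_mod_cast h1
        linarith
      have := hFconv haA hbA ht0 ht1 (by ring)
      have heqpt : t • (((a : ℚ), (l : ℚ)) : ℚ × ℚ) + (1 - t) • (((b : ℚ), (l : ℚ)) : ℚ × ℚ)
          = (((m : ℚ), (l : ℚ)) : ℚ × ℚ) := by
        have h1' : t * a + (1 - t) * b = m := by
          rw [htdef]; field_simp; ring
        ext
        · simpa using h1'
        · show t * l + (1 - t) * l = l; ring
      rwa [heqpt] at this
  have hAeq : A = ↑(Finset.Icc a b) := by
    ext m
    simp only [Finset.coe_Icc, Set.mem_Icc]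
    exact ⟨fun hm => hbound m hm, fun hm => hord m hm.1 hm.2⟩
  have hcard2 : (A.ncard : ℤ) = b - a + 1 := by
    rw [hAeq, Set.ncard_coe_finset, Int.card_Icc]
    have hab : a ≤ b := (hbound a haA).2
    rw [Int.toNat_of_nonneg (by omega)]
    ring
  exact ⟨a, b, haA, hbA, by omega⟩


section Steps
variable {Q : Set (ℚ × ℚ)} {I l : ℤ}

/-- Step C/D helper: scaling a point of Q into the interior. -/
lemma scale_mem_interior (hQconv : Convex ℚ Q) (h0 : (0 : ℚ × ℚ) ∈ interior Q)
    {z : ℚ × ℚ} (hz : z ∈ Q) {t : ℚ} (ht0 : 0 ≤ t) (ht1 : t < 1) :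
    t • z ∈ interior Q := by
  have := hQconv.combo_interior_self_mem_interior h0 hz (a := 1 - t) (b := t)
    (by linarith) ht0 (by ring)
  simpa using this

lemma hw0_of (hQconv : Convex ℚ Q) (h0 : (0 : ℚ × ℚ) ∈ interior Q) (hI : 1 ≤ I)
    (hNo : ∀ p : ℤ × ℤ, p ≠ 0 → (((I : ℚ) * p.1, (I : ℚ) * p.2) : ℚ × ℚ) ∉ interior Q)
    {x : ℚ} (hx : ((x, (0 : ℚ)) : ℚ × ℚ) ∈ Q) : -(I : ℚ) ≤ x ∧ x ≤ (I : ℚ) := by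
  have hIQ : (0 : ℚ) < I := by exact_mod_cast hI
  constructor
  · by_contra h
    push_neg at h
    have hxneg : x < 0 := by linarith
    have ht0 : (0 : ℚ) ≤ (I : ℚ) / (-x) := div_nonneg hIQ.le (by linarith)
    have ht1 : (I : ℚ) / (-x) < 1 := by
      rw [div_lt_one (by linarith)]; linarith
    have hmem := scale_mem_interior hQconv h0 hx ht0 ht1
    have heqp : ((I : ℚ) / (-x)) • ((x, (0 : ℚ)) : ℚ × ℚ)
        = (((I : ℚ) * ((-1 : ℤ) : ℚ), (I : ℚ) * ((0 : ℤ) : ℚ)) : ℚ × ℚ) := by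
      have hx0 : x ≠ 0 := ne_of_lt hxneg
      ext
      · show (I : ℚ) / (-x) * x = (I : ℚ) * ((-1 : ℤ) : ℚ)
        push_cast
        rw [div_mul_eq_mul_div, div_eq_iff (show (-x) ≠ 0 by simpa using hx0)]
        ring
      · show (I : ℚ) / (-x) * 0 = (I : ℚ) * ((0 : ℤ) : ℚ)
        simp
    rw [heqp] at hmem
    exact hNo ((-1 : ℤ), (0 : ℤ)) (by simp) hmem
  · by_contra h
    push_neg at h
    have hxpos : 0 < x := by linarith
    have ht0 : (0 : ℚ) ≤ (I : ℚ) / x := by positivity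
    have ht1 : (I : ℚ) / x < 1 := by rw [div_lt_one hxpos]; linarith
    have hmem := scale_mem_interior hQconv h0 hx ht0 ht1
    have heqp : ((I : ℚ) / x) • ((x, (0 : ℚ)) : ℚ × ℚ)
        = (((I : ℚ) * ((1 : ℤ) : ℚ), (I : ℚ) * ((0 : ℤ) : ℚ)) : ℚ × ℚ) := by
      have hx0 : x ≠ 0 := ne_of_gt hxpos
      ext
      · show (I : ℚ) / x * x = (I : ℚ) * ((1 : ℤ) : ℚ)
        push_cast
        rw [div_mul_eq_mul_div, div_eq_iff hx0]
        ring
      · show (I : ℚ) / x * 0 = (I : ℚ) * ((0 : ℤ) : ℚ)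
        simp
    rw [heqp] at hmem
    exact hNo ((1 : ℤ), (0 : ℤ)) (by simp) hmem

/-- crossing the horizontal axis -/
lemma hcross_of (hQconv : Convex ℚ Q) {q w : ℚ × ℚ} (hq : q ∈ Q) (hw : w ∈ Q)
    (hq2 : 0 ≤ q.2) (hw2 : w.2 < 0) :
    ∃ t : ℚ, 0 < t ∧ t ≤ 1 ∧ t * q.2 + (1 - t) * w.2 = 0 ∧
      ((t * q.1 + (1 - t) * w.1, (0 : ℚ)) : ℚ × ℚ) ∈ Q := by
  have hden : 0 < q.2 - w.2 := by linarith
  set t : ℚ := (-w.2) / (q.2 - w.2) with htdef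
  have ht0 : 0 < t := div_pos (by linarith) hden
  have ht1 : t ≤ 1 := by rw [htdef, div_le_one hden]; linarith
  have hz : t * q.2 + (1 - t) * w.2 = 0 := by
    rw [htdef]; field_simp; ring
  have hzQ := hQconv hq hw ht0.le (by linarith) (by ring : t + (1 - t) = 1)
  have heq : t • q + (1 - t) • w = ((t * q.1 + (1 - t) * w.1, (0 : ℚ)) : ℚ × ℚ) := by
    ext
    · rfl
    · exact hz
  rw [heq] at hzQ
  exact ⟨t, ht0, ht1, hz, hzQ⟩

end Steps


set_option maxHeartbeats 2000000 in
theorem main_norm (Q F : Set (ℚ × ℚ)) (S : Finset (ℤ × ℤ)) (I l : ℤ)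
    (hSQ : Q = convexHull ℚ (toQ '' (S : Set (ℤ × ℤ))))
    (h0 : (0 : ℚ × ℚ) ∈ interior Q)
    (hI : 1 ≤ I)
    (hNo : ∀ p : ℤ × ℤ, p ≠ 0 → (((I : ℚ) * p.1, (I : ℚ) * p.2) : ℚ × ℚ) ∉ interior Q)
    (hl : 0 < l)
    (htop : ∀ y ∈ Q, y.2 ≤ (l : ℚ))
    (hFdef : F = {x ∈ Q | x.2 = (l : ℚ)})
    (hcount : (latticeCount F : ℤ) = 2 * I * (l + 1) + 1) :
    l ≤ I ∧ ∃ c a b : ℤ, a = -(I * (l + 1)) - c * l ∧ b = I * (l + 1) - c * l ∧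
      Q = convexHull ℚ {toQ (a, l), toQ (b, l), toQ (c, -1)} := by
  have hQconv : Convex ℚ Q := hSQ ▸ convex_convexHull ℚ _
  have hIQ : (0 : ℚ) < I := by exact_mod_cast hI
  have hIQ1 : (1 : ℚ) ≤ (I : ℚ) := by exact_mod_cast hI
  have hlQ : (0 : ℚ) < l := by exact_mod_cast hl
  obtain ⟨a, b, haF, hbF, hba⟩ := exists_ab Q F l (2 * I * (l + 1) + 1) hFdef hQconv hcount
    (by nlinarith)
  have hba' : b - a = 2 * I * (l + 1) := by omega
  have haQ : (((a : ℚ), (l : ℚ)) : ℚ × ℚ) ∈ Q := by rw [hFdef] at haF; exact haF.1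
  have hbQ : (((b : ℚ), (l : ℚ)) : ℚ × ℚ) ∈ Q := by rw [hFdef] at hbF; exact hbF.1
  have hbaQ : (b : ℚ) - a = 2 * I * (l + 1) := by exact_mod_cast hba'
  have habQ : (a : ℚ) ≤ b := by nlinarith
  -- horizontal segment at the top
  have hseg : ∀ x : ℚ, (a : ℚ) ≤ x → x ≤ (b : ℚ) → ((x, (l : ℚ)) : ℚ × ℚ) ∈ Q := by
    intro x h1 h2
    rcases eq_or_lt_of_le habQ with heq | hlt
    · have : x = (a : ℚ) := le_antisymm (heq ▸ h2) h1
      rwa [this]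
    · set t : ℚ := (x - a) / ((b : ℚ) - a) with htdef
      have hden : (0 : ℚ) < (b : ℚ) - a := by linarith
      have ht0 : 0 ≤ t := div_nonneg (by linarith) hden.le
      have ht1 : 0 ≤ 1 - t := by
        rw [sub_nonneg, htdef, div_le_one hden]; linarith
      have hmem := hQconv haQ hbQ ht1 ht0 (by ring)
      have heqp : (1 - t) • (((a : ℚ), (l : ℚ)) : ℚ × ℚ) + t • (((b : ℚ), (l : ℚ)) : ℚ × ℚ)
          = ((x, (l : ℚ)) : ℚ × ℚ) := by
        ext
        · show (1 - t) * a + t * b = x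
          rw [htdef]; field_simp; ring
        · show (1 - t) * l + t * l = l
          ring
      rwa [heqp] at hmem
  -- Step C : l ≤ I
  have hlI : l ≤ I := by
    by_contra hcon
    push_neg at hcon
    have hconQ : (I : ℚ) < l := by exact_mod_cast hcon
    set m : ℤ := ⌈(a : ℚ) / (l : ℚ)⌉ with hmdef
    have hm1 : (a : ℚ) / l ≤ m := Int.le_ceil _
    have hm2 : (m : ℚ) < (a : ℚ) / l + 1 := Int.ceil_lt_add_one _
    have hx1 : (a : ℚ) ≤ (m : ℚ) * l := by
      rw [div_le_iff₀ hlQ] at hm1; linarith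
    have hx2 : (m : ℚ) * l ≤ b := by
      have h3 : (m : ℚ) * l < a + l := by
        have := mul_lt_mul_of_pos_right hm2 hlQ
        rw [add_mul, div_mul_cancel₀ _ (ne_of_gt hlQ)] at this
        linarith
      nlinarith [h3, hbaQ, mul_nonneg (by linarith [hIQ1] : (0:ℚ) ≤ (I:ℚ) - 1) (by linarith : (0:ℚ) ≤ (l:ℚ) + 1)]
    have hmem := hseg ((m : ℚ) * l) hx1 hx2
    have ht0 : (0 : ℚ) ≤ (I : ℚ) / l := by positivity
    have ht1 : (I : ℚ) / l < 1 := by rw [div_lt_one hlQ]; exact hconQ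
    have hint := scale_mem_interior hQconv h0 hmem ht0 ht1
    refine hNo (m, 1) (by simp) ?_
    have heqp : ((I : ℚ) / l) • (((m : ℚ) * l, (l : ℚ)) : ℚ × ℚ)
        = (((I : ℚ) * ((m : ℤ) : ℚ), (I : ℚ) * (((1 : ℤ)) : ℚ)) : ℚ × ℚ) := by
      ext
      · show (I : ℚ) / l * ((m : ℚ) * l) = (I : ℚ) * (m : ℚ)
        rw [div_mul_eq_mul_div, div_eq_iff (ne_of_gt hlQ)]; ring
      · show (I : ℚ) / l * l = (I : ℚ) * ((1 : ℤ) : ℚ)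
        push_cast
        rw [div_mul_cancel₀ _ (ne_of_gt hlQ)]
        ring
    rwa [heqp] at hint
  have hw0 : ∀ x : ℚ, ((x, (0 : ℚ)) : ℚ × ℚ) ∈ Q → -(I : ℚ) ≤ x ∧ x ≤ (I : ℚ) :=
    fun x hx => hw0_of hQconv h0 hI hNo hx
  -- chord inequalities for points below the axis
  have hchord : ∀ q ∈ Q, q.2 < 0 →
      (l : ℚ) * q.1 - q.2 * b ≤ (I : ℚ) * ((l : ℚ) - q.2) ∧
      -((I : ℚ) * ((l : ℚ) - q.2)) ≤ (l : ℚ) * q.1 - q.2 * a := by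
    intro q hq hq2
    have hden : (0 : ℚ) < (l : ℚ) - q.2 := by linarith
    constructor
    · obtain ⟨t, ht0, ht1, hz, hzQ⟩ := hcross_of hQconv hbQ hq hlQ.le hq2
      have hz' : t * (l : ℚ) + (1 - t) * q.2 = 0 := hz
      have hT : t * ((l : ℚ) - q.2) = -q.2 := by linarith [hz']
      have hb1' : t * (b : ℚ) + (1 - t) * q.1 ≤ (I : ℚ) := (hw0 _ hzQ).2
      have hkey : ((l : ℚ) - q.2) * (t * b + (1 - t) * q.1) = (l : ℚ) * q.1 - q.2 * b := by
        linear_combination ((b : ℚ) - q.1) * hT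
      calc (l : ℚ) * q.1 - q.2 * b = ((l : ℚ) - q.2) * (t * b + (1 - t) * q.1) := hkey.symm
        _ ≤ ((l : ℚ) - q.2) * I := mul_le_mul_of_nonneg_left hb1' hden.le
        _ = (I : ℚ) * ((l : ℚ) - q.2) := by ring
    · obtain ⟨t, ht0, ht1, hz, hzQ⟩ := hcross_of hQconv haQ hq hlQ.le hq2
      have hz' : t * (l : ℚ) + (1 - t) * q.2 = 0 := hz
      have hT : t * ((l : ℚ) - q.2) = -q.2 := by linarith [hz']
      have hb1' : -(I : ℚ) ≤ t * (a : ℚ) + (1 - t) * q.1 := (hw0 _ hzQ).1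
      have hkey : ((l : ℚ) - q.2) * (t * a + (1 - t) * q.1) = (l : ℚ) * q.1 - q.2 * a := by
        linear_combination ((a : ℚ) - q.1) * hT
      calc -((I : ℚ) * ((l : ℚ) - q.2)) = ((l : ℚ) - q.2) * (-(I : ℚ)) := by ring
        _ ≤ ((l : ℚ) - q.2) * (t * a + (1 - t) * q.1) := mul_le_mul_of_nonneg_left hb1' hden.le
        _ = (l : ℚ) * q.1 - q.2 * a := hkey
  -- Q lies above height -1
  have hdepth : ∀ q ∈ Q, -(1 : ℚ) ≤ q.2 := by
    intro q hq
    by_contra h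
    push_neg at h
    obtain ⟨h1, h2⟩ := hchord q hq (by linarith)
    have key : -q.2 * ((b : ℚ) - a) ≤ 2 * I * ((l : ℚ) - q.2) := by linarith
    rw [hbaQ] at key
    have h4 : 0 ≤ 2 * (I : ℚ) * l * (1 + q.2) := by nlinarith [key]
    nlinarith [h4, mul_pos (mul_pos (by norm_num : (0:ℚ) < 2) hIQ) hlQ]
  have hbot : ∀ q ∈ Q, q.2 = -1 → (l : ℚ) * q.1 = (I : ℚ) * ((l : ℚ) + 1) - b := by
    intro q hq hq2
    obtain ⟨h1, h2⟩ := hchord q hq (by rw [hq2]; norm_num)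
    rw [hq2] at h1 h2
    have hle : (l : ℚ) * q.1 ≤ (I : ℚ) * ((l : ℚ) + 1) - b := by linarith
    have hge : (I : ℚ) * ((l : ℚ) + 1) - (b : ℚ) ≤ (l : ℚ) * q.1 := by linarith
    linarith
  -- bottom vertex
  have hSneg : ∃ s ∈ S, s.2 < 0 := by
    by_contra hc
    push_neg at hc
    have hsub : Q ⊆ {x : ℚ × ℚ | 0 ≤ x.2} := by
      rw [hSQ]
      apply convexHull_min
      · rintro x ⟨p, hp, rfl⟩
        have := hc p hp
        show (0 : ℚ) ≤ ((p.2 : ℤ) : ℚ)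
        exact_mod_cast this
      · intro x hx y hy s t hs ht hst
        show (0 : ℚ) ≤ (s • x + t • y).2
        have h5 : (s • x + t • y).2 = s * x.2 + t * y.2 := rfl
        rw [h5]
        exact add_nonneg (mul_nonneg hs hx) (mul_nonneg ht hy)
    have hcont : Continuous (fun y : ℚ => (((0 : ℚ), y) : ℚ × ℚ)) := by fun_prop
    have hopen : IsOpen ((fun y : ℚ => (((0 : ℚ), y) : ℚ × ℚ)) ⁻¹' interior Q) :=
      isOpen_interior.preimage hcont
    have h0m : (0 : ℚ) ∈ (fun y : ℚ => (((0 : ℚ), y) : ℚ × ℚ)) ⁻¹' interior Q := by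
      show (((0 : ℚ), (0 : ℚ)) : ℚ × ℚ) ∈ interior Q
      exact h0
    obtain ⟨lo, hi, hmem, hsub2⟩ := mem_nhds_iff_exists_Ioo_subset.mp (hopen.mem_nhds h0m)
    have hneg : (((0 : ℚ), lo/2) : ℚ × ℚ) ∈ interior Q :=
      hsub2 ⟨by linarith [hmem.1], by linarith [hmem.1, hmem.2]⟩
    have h9 := hsub (interior_subset hneg)
    simp only [Set.mem_setOf_eq] at h9
    have h10 : (0 : ℚ) ≤ lo/2 := h9
    linarith [hmem.1]
  obtain ⟨s, hsS, hs2⟩ := hSneg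
  have hsQ : toQ s ∈ Q := by
    rw [hSQ]; exact subset_convexHull ℚ _ ⟨s, hsS, rfl⟩
  have hs2ge : -(1 : ℚ) ≤ ((s.2 : ℤ) : ℚ) := hdepth _ hsQ
  have hs2eq : s.2 = -1 := by
    have : (-1 : ℤ) ≤ s.2 := by exact_mod_cast hs2ge
    omega
  set c := s.1 with hcdef
  have hsc : toQ s = (((c : ℚ), (-1 : ℚ)) : ℚ × ℚ) := by
    rw [toQ, hs2eq]; push_cast; rfl
  have hcQ : (((c : ℚ), (-1 : ℚ)) : ℚ × ℚ) ∈ Q := hsc ▸ hsQ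
  have hcl : (c : ℚ) * l = (I : ℚ) * ((l : ℚ) + 1) - b := by
    have h6 := hbot _ hcQ rfl
    linarith [h6]
  have hclZ : c * l = I * (l + 1) - b := by exact_mod_cast hcl
  have hbZ : b = I * (l + 1) - c * l := by linarith [hclZ]
  have haZ : a = -(I * (l + 1)) - c * l := by linarith [hba', hbZ]
  have hIl1 : (I : ℚ) * ((l : ℚ) + 1) = (b : ℚ) + c * l := by linarith [hcl]
  have haQc : (a : ℚ) = -((I : ℚ) * ((l : ℚ) + 1)) - c * l := by exact_mod_cast haZ
  -- right halfplane
  have hG1 : ∀ q ∈ Q, ((l : ℚ) + 1) * q.1 - ((b : ℚ) - c) * q.2 ≤ (I : ℚ) * ((l : ℚ) + 1) := by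
    intro q hq
    by_contra hcon
    push_neg at hcon
    rcases le_or_gt 0 q.2 with h2 | h2
    · obtain ⟨t, ht0, ht1, hz, hzQ⟩ := hcross_of hQconv hq hcQ h2 (by norm_num)
      have hz' : t * q.2 + (1 - t) * (-1 : ℚ) = 0 := hz
      have hb1 : t * q.1 + (1 - t) * (c : ℚ) ≤ (I : ℚ) := (hw0 _ hzQ).2
      have hkey : ((l : ℚ) + 1) * (t * q.1 + (1 - t) * c)
          = t * (((l : ℚ) + 1) * q.1 - ((b : ℚ) - c) * q.2)
            + (1 - t) * ((I : ℚ) * ((l : ℚ) + 1))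
            + ((b : ℚ) - c) * (t * q.2 + (1 - t) * (-1)) := by
        linear_combination (-(1 - t)) * hIl1
      have hlt2 : (I : ℚ) * ((l : ℚ) + 1) < ((l : ℚ) + 1) * (t * q.1 + (1 - t) * c) := by
        rw [hkey, hz']
        have h6 := mul_lt_mul_of_pos_left hcon ht0
        linarith [h6]
      have h7 : (I : ℚ) < t * q.1 + (1 - t) * c := by nlinarith [hlt2, hlQ]
      linarith
    · obtain ⟨t, ht0, ht1, hz, hzQ⟩ := hcross_of hQconv hbQ hq hlQ.le h2
      have hz' : t * (l : ℚ) + (1 - t) * q.2 = 0 := hz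
      have ht1' : t < 1 := by
        rcases lt_or_eq_of_le ht1 with h | h
        · exact h
        · exfalso
          rw [h] at hz'
          norm_num at hz'
          omega
      have hb1 : t * (b : ℚ) + (1 - t) * q.1 ≤ (I : ℚ) := (hw0 _ hzQ).2
      have hkey : ((l : ℚ) + 1) * (t * b + (1 - t) * q.1)
          = (1 - t) * (((l : ℚ) + 1) * q.1 - ((b : ℚ) - c) * q.2)
            + t * ((I : ℚ) * ((l : ℚ) + 1))
            + ((b : ℚ) - c) * (t * (l : ℚ) + (1 - t) * q.2) := by
        linear_combination (-t) * hIl1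
      have hlt2 : (I : ℚ) * ((l : ℚ) + 1) < ((l : ℚ) + 1) * (t * b + (1 - t) * q.1) := by
        rw [hkey, hz']
        have h6 := mul_lt_mul_of_pos_left hcon (by linarith : (0 : ℚ) < 1 - t)
        linarith [h6]
      have h7 : (I : ℚ) < t * b + (1 - t) * q.1 := by nlinarith [hlt2, hlQ]
      linarith
  -- left halfplane
  have hG2 : ∀ q ∈ Q, -((l : ℚ) + 1) * q.1 + ((a : ℚ) - c) * q.2 ≤ (I : ℚ) * ((l : ℚ) + 1) := by
    intro q hq
    by_contra hcon
    push_neg at hcon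
    rcases le_or_gt 0 q.2 with h2 | h2
    · obtain ⟨t, ht0, ht1, hz, hzQ⟩ := hcross_of hQconv hq hcQ h2 (by norm_num)
      have hz' : t * q.2 + (1 - t) * (-1 : ℚ) = 0 := hz
      have hb1 : -(I : ℚ) ≤ t * q.1 + (1 - t) * (c : ℚ) := (hw0 _ hzQ).1
      have hkey : -((l : ℚ) + 1) * (t * q.1 + (1 - t) * c)
          = t * (-((l : ℚ) + 1) * q.1 + ((a : ℚ) - c) * q.2)
            + (1 - t) * ((I : ℚ) * ((l : ℚ) + 1))
            - ((a : ℚ) - c) * (t * q.2 + (1 - t) * (-1)) := by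
        linear_combination (-(1 - t)) * haQc
      have hlt2 : (I : ℚ) * ((l : ℚ) + 1) < -((l : ℚ) + 1) * (t * q.1 + (1 - t) * c) := by
        rw [hkey, hz']
        have h6 := mul_lt_mul_of_pos_left hcon ht0
        linarith [h6]
      have h7 : t * q.1 + (1 - t) * c < -(I : ℚ) := by nlinarith [hlt2, hlQ]
      linarith
    · obtain ⟨t, ht0, ht1, hz, hzQ⟩ := hcross_of hQconv haQ hq hlQ.le h2
      have hz' : t * (l : ℚ) + (1 - t) * q.2 = 0 := hz
      have ht1' : t < 1 := by
        rcases lt_or_eq_of_le ht1 with h | h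
        · exact h
        · exfalso
          rw [h] at hz'
          norm_num at hz'
          omega
      have hb1 : -(I : ℚ) ≤ t * (a : ℚ) + (1 - t) * q.1 := (hw0 _ hzQ).1
      have hkey : -((l : ℚ) + 1) * (t * a + (1 - t) * q.1)
          = (1 - t) * (-((l : ℚ) + 1) * q.1 + ((a : ℚ) - c) * q.2)
            + t * ((I : ℚ) * ((l : ℚ) + 1))
            - ((a : ℚ) - c) * (t * (l : ℚ) + (1 - t) * q.2) := by
        linear_combination (-t) * haQc
      have hlt2 : (I : ℚ) * ((l : ℚ) + 1) < -((l : ℚ) + 1) * (t * a + (1 - t) * q.1) := by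
        rw [hkey, hz']
        have h6 := mul_lt_mul_of_pos_left hcon (by linarith : (0 : ℚ) < 1 - t)
        linarith [h6]
      have h7 : t * a + (1 - t) * q.1 < -(I : ℚ) := by nlinarith [hlt2, hlQ]
      linarith
  -- the triangle
  set v1 : ℚ × ℚ := ((a : ℚ), (l : ℚ)) with hv1
  set v2 : ℚ × ℚ := ((b : ℚ), (l : ℚ)) with hv2
  set v3 : ℚ × ℚ := ((c : ℚ), (-1 : ℚ)) with hv3
  set T : Set (ℚ × ℚ) := convexHull ℚ {v1, v2, v3} with hT
  have hTconv : Convex ℚ T := convex_convexHull ℚ _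
  have hv1T : v1 ∈ T := subset_convexHull ℚ _ (by simp)
  have hv2T : v2 ∈ T := subset_convexHull ℚ _ (by simp)
  have hv3T : v3 ∈ T := subset_convexHull ℚ _ (by simp)
  have hTQ : T ⊆ Q := by
    apply convexHull_min _ hQconv
    rintro x (rfl | rfl | rfl)
    · exact haQ
    · exact hbQ
    · exact hcQ
  have hQT : Q ⊆ T := by
    intro q hq
    have h2top : q.2 ≤ (l : ℚ) := htop q hq
    have h2bot : -(1 : ℚ) ≤ q.2 := hdepth q hq
    rcases eq_or_lt_of_le h2bot with hbe | hbl
    · -- q.2 = -1, so q = v3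
      have h6 := hbot q hq hbe.symm
      have hq1 : q.1 = (c : ℚ) := by
        have h7 : (l : ℚ) * q.1 = (c : ℚ) * l := by linarith [hcl]
        have := mul_left_cancel₀ (ne_of_gt hlQ) (by linarith [h7] : (l : ℚ) * q.1 = (l : ℚ) * c)
        exact this
      have : q = v3 := Prod.ext hq1 hbe.symm
      rw [this]; exact hv3T
    · -- -1 < q.2
      have hl1 : (0 : ℚ) < (l : ℚ) + 1 := by linarith
      have hq21 : (0 : ℚ) < q.2 + 1 := by linarith
      have hbapos : (0 : ℚ) < (b : ℚ) - a := by
        rw [hbaQ]; nlinarith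
      set γ : ℚ := ((l : ℚ) - q.2) / ((l : ℚ) + 1) with hγdef
      set δ : ℚ := (q.2 + 1) / ((l : ℚ) + 1) with hδdef
      have hγ0 : 0 ≤ γ := div_nonneg (by linarith) hl1.le
      have hδ0 : 0 < δ := div_pos hq21 hl1
      have hγδ : γ + δ = 1 := by
        rw [hγdef, hδdef, ← add_div, div_eq_one_iff_eq (ne_of_gt hl1)]; ring
      set β : ℚ := (((l : ℚ) + 1) * q.1 - ((l : ℚ) - q.2) * c - (q.2 + 1) * a)
        / ((q.2 + 1) * ((b : ℚ) - a)) with hβdef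
      have hdenpos : (0 : ℚ) < (q.2 + 1) * ((b : ℚ) - a) := mul_pos hq21 hbapos
      have hβ0 : 0 ≤ β := by
        apply div_nonneg _ hdenpos.le
        have := hG2 q hq
        linarith [this]
      have hβ1 : β ≤ 1 := by
        rw [hβdef, div_le_one hdenpos]
        have := hG1 q hq
        linarith [this, hIl1]
      have hwT : (1 - β) • v1 + β • v2 ∈ T := hTconv hv1T hv2T (by linarith) hβ0 (by ring)
      have hqT : γ • v3 + δ • ((1 - β) • v1 + β • v2) ∈ T :=
        hTconv hv3T hwT hγ0 hδ0.le hγδ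
      have heqq : γ • v3 + δ • ((1 - β) • v1 + β • v2) = q := by
        have hne1 : ((l : ℚ) + 1) ≠ 0 := ne_of_gt hl1
        have hne2 : (q.2 + 1) ≠ 0 := ne_of_gt hq21
        have hne3 : ((b : ℚ) - a) ≠ 0 := ne_of_gt hbapos
        ext
        · show γ * c + δ * ((1 - β) * a + β * b) = q.1
          rw [hγdef, hδdef, hβdef]
          field_simp
          ring
        · show γ * (-1) + δ * ((1 - β) * l + β * l) = q.2
          rw [hγdef, hδdef]
          field_simp
          ring
      rw [← heqq]; exact hqT
  have hQeqT : Q = T := Set.Subset.antisymm hQT hTQ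
  refine ⟨hlI, c, a, b, haZ, hbZ, ?_⟩
  rw [hQeqT, hT]
  congr 1



end AuxProof

/-- Equality case: if `Q` is an IP-polygon of order `I` with a facet `F` of local
index `l` satisfying `|F ∩ ℤ²| = 2I(l + 1) + 1`, then `l ≤ I` and `Q` is unimodularly
equivalent to the triangle with vertices `(−I(l+1), l)`, `(I(l+1), l)`, `(0, −1)`. -/
theorem facet_lattice_points_equality_case
    (Q : Set (ℚ × ℚ)) (F : Set (ℚ × ℚ)) (η : ℤ × ℤ) (I l : ℤ)
    (hQ : IsIPPolygon Q) (hI : HasOrder Q I) (hF : IsFacetWith Q η l F)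
    (heq : (latticeCount F : ℤ) = 2 * I * (l + 1) + 1) :
    l ≤ I ∧ UnimodEquiv Q (convexHull ℚ
      {toQ (-(I * (l + 1)), l), toQ (I * (l + 1), l), toQ (0, -1)}) := by
  obtain ⟨⟨⟨S, hSQ⟩, -⟩, h0⟩ := hQ
  obtain ⟨hI1, hNoPts, -⟩ := hI
  obtain ⟨hprim, hl, hineq, hFdefO, -⟩ := hF
  have hIne : (I : ℚ) ≠ 0 := by
    have : (0 : ℚ) < I := by exact_mod_cast hI1
    exact ne_of_gt this
  -- original no-lattice-point statement
  have hNoOrig : ∀ p : ℤ × ℤ, p ≠ 0 → ((I : ℚ)) • toQ p ∉ interior Q := by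
    intro p hp hmem
    apply hp
    apply hNoPts
    rw [interior_smul₀ (inv_ne_zero hIne) Q,
      Set.mem_smul_set_iff_inv_smul_mem₀ (inv_ne_zero hIne), inv_inv]
    exact hmem
  -- Bezout
  obtain ⟨u, v, huv⟩ := Int.isCoprime_iff_gcd_eq_one.mpr hprim
  -- the normalizing matrix e = [[v, -u],[η1, η2]]
  have hdet : v * η.2 - (-u) * η.1 = 1 := by linarith [huv]
  set e := mk2 v (-u) η.1 η.2 with he
  set eZ := mk2Z v (-u) η.1 η.2 with heZ
  have hdet' : η.2 * v - u * (-η.1) = 1 := by linarith [huv]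
  set eZinv := mk2Z η.2 u (-η.1) v with heZinv
  have hinvZ : ∀ p, eZ (eZinv p) = p := by
    intro p
    have := mk2Z_inv_apply η.2 u (-η.1) v hdet' p
    simpa [heZ, heZinv] using this
  have hinvZ' : ∀ p, eZinv (eZ p) = p := by
    intro p
    have := mk2Z_inv_apply v (-u) η.1 η.2 hdet p
    simpa [heZ, heZinv] using this
  have hinvE : ∀ x, mk2 η.2 u (-η.1) v (e x) = x := by
    intro x
    have := mk2_inv_apply v (-u) η.1 η.2 hdet x
    simpa [he] using this
  have he2 : ∀ x : ℚ × ℚ, (e x).2 = pairQ η x := fun x => rfl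
  set Q' := e '' Q with hQ'
  set F' := e '' F with hF'
  set S' := S.image eZ with hS'
  -- transported hypotheses
  have hSQ' : Q' = convexHull ℚ (toQ '' (S' : Set (ℤ × ℤ))) := by
    rw [hQ', hSQ, LinearMap.image_convexHull]
    congr 1
    rw [hS', Finset.coe_image, ← Set.image_comp, ← Set.image_comp]
    apply Set.image_congr
    intro p _
    exact mk2_toQ v (-u) η.1 η.2 p
  have h0' : (0 : ℚ × ℚ) ∈ interior Q' := by
    rw [hQ', ← mk2_image_interior v (-u) η.1 η.2 hdet]
    exact ⟨0, h0, map_zero e⟩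
  have hNo' : ∀ p : ℤ × ℤ, p ≠ 0 → (((I : ℚ) * p.1, (I : ℚ) * p.2) : ℚ × ℚ) ∉ interior Q' := by
    intro p hp hmem
    rw [hQ', ← mk2_image_interior v (-u) η.1 η.2 hdet] at hmem
    obtain ⟨y, hy, hey⟩ := hmem
    have hyval : y = (I : ℚ) • toQ (eZinv p) := by
      have h1 : mk2 η.2 u (-η.1) v (e y) = y := hinvE y
      rw [hey] at h1
      have h2 : (((I : ℚ) * p.1, (I : ℚ) * p.2) : ℚ × ℚ) = (I : ℚ) • toQ p := rfl
      rw [h2, map_smul, mk2_toQ] at h1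
      exact h1.symm
    have hpz : eZinv p ≠ 0 := by
      intro h
      apply hp
      have := hinvZ p
      rw [h] at this
      exact (by simpa [heZ, mk2Z] using this.symm : p = (0, 0))
    exact hNoOrig (eZinv p) hpz (hyval ▸ hy)
  have htop' : ∀ y ∈ Q', y.2 ≤ (l : ℚ) := by
    rintro y ⟨x, hx, rfl⟩
    rw [he2 x]
    exact hineq x hx
  have hFdef' : F' = {x ∈ Q' | x.2 = (l : ℚ)} := by
    ext x'
    constructor
    · rintro ⟨x, hxF, rfl⟩
      rw [hFdefO] at hxF
      exact ⟨⟨x, hxF.1, rfl⟩, by rw [he2 x]; exact hxF.2⟩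
    · rintro ⟨⟨x, hxQ, rfl⟩, h2⟩
      refine ⟨x, ?_, rfl⟩
      rw [hFdefO]
      exact ⟨hxQ, by rw [← he2 x]; exact h2⟩
  have hcount' : (latticeCount F' : ℤ) = 2 * I * (l + 1) + 1 := by
    rw [← heq]
    congr 1
    rw [latticeCount, latticeCount]
    have hsets : {p : ℤ × ℤ | toQ p ∈ F'} = eZ '' {p : ℤ × ℤ | toQ p ∈ F} := by
      ext p
      constructor
      · rintro hp
        obtain ⟨x, hxF, hex⟩ := hp
        refine ⟨eZinv p, ?_, hinvZ p⟩
        show toQ (eZinv p) ∈ F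
        have h1 : mk2 η.2 u (-η.1) v (e x) = x := hinvE x
        rw [hex] at h1
        rw [heZinv, ← mk2_toQ] at *
        rw [← h1] at hxF
        convert hxF using 2
      · rintro ⟨q, hq, rfl⟩
        refine ⟨toQ q, hq, ?_⟩
        show mk2 v (-u) η.1 η.2 (toQ q) = toQ (mk2Z v (-u) η.1 η.2 q)
        exact mk2_toQ v (-u) η.1 η.2 q
    rw [hsets, Set.ncard_image_of_injective _ (mk2Z_inj v (-u) η.1 η.2 hdet)]
  obtain ⟨hlI, c₀, a, b, haZ, hbZ, hQ'eq⟩ :=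
    main_norm Q' F' S' I l hSQ' h0' hI1 hNo' hl htop' hFdef' hcount'
  refine ⟨hlI, v + c₀ * η.1, c₀ * η.2 - u, η.1, η.2, Or.inl (by ring_nf; linarith [huv]), ?_⟩
  have hfuneq : (fun x : ℚ × ℚ => (((v + c₀ * η.1 : ℤ) : ℚ) * x.1 + ((c₀ * η.2 - u : ℤ) : ℚ) * x.2,
      ((η.1 : ℤ) : ℚ) * x.1 + ((η.2 : ℤ) : ℚ) * x.2))
      = (fun x => mk2 1 c₀ 0 1 (e x)) := by
    funext x
    show _ = mk2 1 c₀ 0 1 (mk2 v (-u) η.1 η.2 x)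
    simp only [mk2_apply]
    rw [Prod.ext_iff]
    constructor <;> · push_cast; ring
  rw [hfuneq]
  have himg : (fun x => mk2 1 c₀ 0 1 (e x)) '' Q = mk2 1 c₀ 0 1 '' Q' := by
    rw [hQ', Set.image_image]
  rw [himg, hQ'eq, LinearMap.image_convexHull]
  congr 1
  rw [Set.image_insert_eq, Set.image_insert_eq, Set.image_singleton,
    mk2_toQ, mk2_toQ, mk2_toQ]
  have e1 : mk2Z 1 c₀ 0 1 (a, l) = (-(I * (l + 1)), l) := by
    simp [mk2Z]; omega
  have e2 : mk2Z 1 c₀ 0 1 (b, l) = (I * (l + 1), l) := by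
    simp [mk2Z]; omega
  have e3 : mk2Z 1 c₀ 0 1 (c₀, -1) = (0, -1) := by
    simp [mk2Z]
  rw [e1, e2, e3]
end

section
/- Let Q be an LDP-polygon with maximal local index m_Q ≥ 2. Then every facet F of Q satisfies |F ∩ ℤ²| ≤ 2 m_Q (m_Q + 1). -/
open Pointwise

namespace LDPAux

lemma toQ_injective : Function.Injective toQ := by
  intro p q h
  have h1 : (p.1 : ℚ) = q.1 := congrArg Prod.fst h
  have h2 : (p.2 : ℚ) = q.2 := congrArg Prod.snd h
  exact Prod.ext (by exact_mod_cast h1) (by exact_mod_cast h2)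

lemma pairQ_toQ (η p : ℤ × ℤ) :
    pairQ η (toQ p) = ((η.1 * p.1 + η.2 * p.2 : ℤ) : ℚ) := by
  simp only [pairQ, toQ]
  push_cast
  ring

lemma isLinearMap_pairQ (η : ℤ × ℤ) : IsLinearMap ℚ (pairQ η) := by
  constructor
  · intro x y; simp [pairQ]; ring
  · intro c x; simp [pairQ, Prod.smul_fst, Prod.smul_snd, smul_eq_mul]; ring

lemma pairQ_comb (η : ℤ × ℤ) (a b : ℚ) (x y : ℚ × ℚ) :
    pairQ η (a • x + b • y) = a * pairQ η x + b * pairQ η y := by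
  simp [pairQ, Prod.smul_fst, Prod.smul_snd, smul_eq_mul]; ring

lemma pairQ_smul (η : ℤ × ℤ) (a : ℚ) (x : ℚ × ℚ) :
    pairQ η (a • x) = a * pairQ η x := by
  simp [pairQ, Prod.smul_fst, Prod.smul_snd, smul_eq_mul]; ring

lemma hull_pair_le (η : ℤ × ℤ) (c : ℚ) (X : Set (ℚ × ℚ))
    (h : ∀ x ∈ X, pairQ η x ≤ c) :
    ∀ x ∈ convexHull ℚ X, pairQ η x ≤ c :=
  fun _x hx => convexHull_min h (convex_halfSpace_le (isLinearMap_pairQ η) c) hx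

lemma hull_pair_ge (η : ℤ × ℤ) (c : ℚ) (X : Set (ℚ × ℚ))
    (h : ∀ x ∈ X, c ≤ pairQ η x) :
    ∀ x ∈ convexHull ℚ X, c ≤ pairQ η x :=
  fun _x hx => convexHull_min h (convex_halfSpace_ge (isLinearMap_pairQ η) c) hx

lemma exists_nudge {Q : Set (ℚ × ℚ)} {x : ℚ × ℚ} (hx : x ∈ interior Q)
    (u : ℚ × ℚ) : ∃ δ : ℚ, 0 < δ ∧ x + δ • u ∈ Q := by
  have hc : Continuous (fun δ : ℚ => x + δ • u) :=
    continuous_const.add (continuous_id.smul continuous_const)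
  have hnb : interior Q ∈ nhds x := (isOpen_interior).mem_nhds hx
  have hpre : (fun δ : ℚ => x + δ • u) ⁻¹' interior Q ∈ nhds (0 : ℚ) := by
    have h := hc.continuousAt (x := (0:ℚ))
    have h0 : x + (0:ℚ) • u = x := by simp
    exact h (by simpa using hnb)
  rcases Metric.mem_nhds_iff.mp hpre with ⟨ε, hε, hball⟩
  rcases exists_rat_btwn (show (0:ℝ) < ε from hε) with ⟨q, hq0, hqε⟩
  have hq0' : 0 < q := by exact_mod_cast hq0
  refine ⟨q, hq0', ?_⟩
  have hmem : q ∈ Metric.ball (0 : ℚ) ε := by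
    simp only [Metric.mem_ball, Rat.dist_eq, Rat.cast_zero, sub_zero]
    rwa [abs_of_pos hq0]
  exact interior_subset (hball hmem)

lemma interior_pair_lt {Q : Set (ℚ × ℚ)} {η : ℤ × ℤ} {c : ℚ}
    (hη : η ≠ 0) (hle : ∀ y ∈ Q, pairQ η y ≤ c)
    {x : ℚ × ℚ} (hx : x ∈ interior Q) : pairQ η x < c := by
  rcases lt_or_eq_of_le (hle x (interior_subset hx)) with h | h
  · exact h
  exfalso
  rcases exists_nudge hx (toQ η) with ⟨δ, hδ, hmem⟩
  have hself : pairQ η (toQ η) = (η.1:ℚ)^2 + (η.2:ℚ)^2 := by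
    simp only [pairQ, toQ]; ring
  have hval : pairQ η (x + δ • toQ η) = c + δ * ((η.1:ℚ)^2 + (η.2:ℚ)^2) := by
    have hc := pairQ_comb η 1 δ x (toQ η)
    simp only [one_smul, one_mul] at hc
    rw [hc, h, hself]
  have hpos : (0:ℚ) < (η.1:ℚ)^2 + (η.2:ℚ)^2 := by
    have h12 : η.1 ≠ 0 ∨ η.2 ≠ 0 := by
      by_contra hcon
      push_neg at hcon
      exact hη (Prod.ext hcon.1 hcon.2)
    rcases h12 with h1 | h1
    · have h2 : (0:ℚ) < (η.1:ℚ)^2 := by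
        have : (η.1:ℚ) ≠ 0 := by exact_mod_cast h1
        positivity
      nlinarith [sq_nonneg ((η.2:ℚ))]
    · have h2 : (0:ℚ) < (η.2:ℚ)^2 := by
        have : (η.2:ℚ) ≠ 0 := by exact_mod_cast h1
        positivity
      nlinarith [sq_nonneg ((η.1:ℚ))]
  have := hle _ hmem
  rw [hval] at this
  nlinarith

lemma face_subset_hull (S : Finset (ℤ × ℤ)) (η : ℤ × ℤ) (l : ℤ)
    (hle : ∀ s ∈ S, pairQ η (toQ s) ≤ (l : ℚ)) :
    ∀ x ∈ convexHull ℚ (toQ '' (S : Set (ℤ × ℤ))), pairQ η x = (l:ℚ) →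
      x ∈ convexHull ℚ (toQ '' ((S.filter (fun s => η.1 * s.1 + η.2 * s.2 = l) : Finset (ℤ × ℤ)) : Set (ℤ × ℤ))) := by
  classical
  intro x hx hxl
  rw [convexHull_eq] at hx
  obtain ⟨ι, t, w, z, hw0, hw1, hz, hcm⟩ := hx
  have hxsum : x = ∑ i ∈ t, w i • z i := by
    rw [← hcm, Finset.centerMass_eq_of_sum_1 _ _ hw1]
  have hpz : ∀ i ∈ t, pairQ η (z i) ≤ (l:ℚ) := by
    intro i hi
    obtain ⟨s, hs, heq⟩ := hz i hi
    rw [← heq]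
    exact hle s (Finset.mem_coe.mp hs)
  set L : (ℚ × ℚ) →ₗ[ℚ] ℚ := IsLinearMap.mk' (pairQ η) (isLinearMap_pairQ η) with hL
  have hLx : ∀ y, L y = pairQ η y := fun y => rfl
  have hlin : pairQ η x = ∑ i ∈ t, w i * pairQ η (z i) := by
    rw [← hLx, hxsum, map_sum]
    exact Finset.sum_congr rfl (fun i _ => by rw [map_smul, smul_eq_mul, hLx])
  -- all positive-weight generators lie on the face
  have hzero : ∀ i ∈ t, w i * ((l:ℚ) - pairQ η (z i)) = 0 := by
    have hsum0 : ∑ i ∈ t, w i * ((l:ℚ) - pairQ η (z i)) = 0 := by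
      have : ∑ i ∈ t, w i * ((l:ℚ) - pairQ η (z i))
          = (∑ i ∈ t, w i) * l - ∑ i ∈ t, w i * pairQ η (z i) := by
        rw [Finset.sum_mul, ← Finset.sum_sub_distrib]
        exact Finset.sum_congr rfl (fun i _ => by ring)
      rw [this, hw1, ← hlin, hxl]; ring
    have hnn : ∀ i ∈ t, 0 ≤ w i * ((l:ℚ) - pairQ η (z i)) := fun i hi =>
      mul_nonneg (hw0 i hi) (by linarith [hpz i hi])
    intro i hi
    exact (Finset.sum_eq_zero_iff_of_nonneg hnn).mp hsum0 i hi
  set t' : Finset ι := t.filter (fun i => w i ≠ 0) with ht'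
  have hw1' : ∑ i ∈ t', w i = 1 := by
    rw [ht', Finset.sum_filter_ne_zero]; exact hw1
  have hxsum' : x = ∑ i ∈ t', w i • z i := by
    rw [hxsum, ht']
    rw [Finset.sum_filter_of_ne]
    intro i hi hne
    intro h0
    apply hne
    rw [h0, zero_smul]
  have hzmem : ∀ i ∈ t', z i ∈ toQ '' ((S.filter (fun s => η.1 * s.1 + η.2 * s.2 = l) : Finset (ℤ × ℤ)) : Set (ℤ × ℤ)) := by
    intro i hi
    rw [ht', Finset.mem_filter] at hi
    obtain ⟨hit, hwne⟩ := hi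
    obtain ⟨s, hs, heq⟩ := hz i hit
    have hface : pairQ η (z i) = (l:ℚ) := by
      have := hzero i hit
      rcases mul_eq_zero.mp this with h | h
      · exact absurd h hwne
      · linarith
    refine ⟨s, ?_, heq⟩
    rw [Finset.mem_coe, Finset.mem_filter]
    refine ⟨Finset.mem_coe.mp hs, ?_⟩
    have : pairQ η (toQ s) = (l:ℚ) := by rw [heq]; exact hface
    rw [pairQ_toQ] at this
    exact_mod_cast this
  rw [hxsum']
  have := Finset.centerMass_mem_convexHull t'
    (fun i hi => hw0 i (Finset.mem_of_mem_filter i hi))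
    (by rw [hw1']; norm_num) hzmem
  rwa [Finset.centerMass_eq_of_sum_1 _ _ hw1'] at this

lemma sq_sum_pos {p : ℤ × ℤ} (hp : p ≠ 0) : (0:ℚ) < (p.1:ℚ)^2 + (p.2:ℚ)^2 := by
  have h12 : p.1 ≠ 0 ∨ p.2 ≠ 0 := by
    by_contra hcon; push_neg at hcon; exact hp (Prod.ext hcon.1 hcon.2)
  rcases h12 with h1 | h1
  · have h2 : (0:ℚ) < (p.1:ℚ)^2 := by
      have : (p.1:ℚ) ≠ 0 := by exact_mod_cast h1
      positivity
    nlinarith [sq_nonneg ((p.2:ℚ))]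
  · have h2 : (0:ℚ) < (p.2:ℚ)^2 := by
      have : (p.2:ℚ) ≠ 0 := by exact_mod_cast h1
      positivity
    nlinarith [sq_nonneg ((p.1:ℚ))]

lemma combo_eq {a b p1 p2 L : ℚ} (ha : 0 < a) (hb : 0 < b) (hab : a + b = 1)
    (h1 : p1 ≤ L) (h2 : p2 ≤ L) (h : a * p1 + b * p2 = L) : p1 = L ∧ p2 = L := by
  constructor
  · by_contra hne
    have hlt : p1 < L := lt_of_le_of_ne h1 hne
    have hL : a * L + b * L = L := by rw [← add_mul, hab, one_mul]
    linarith [mul_lt_mul_of_pos_left hlt ha, mul_le_mul_of_nonneg_left h2 hb.le]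
  · by_contra hne
    have hlt : p2 < L := lt_of_le_of_ne h2 hne
    have hL : a * L + b * L = L := by rw [← add_mul, hab, one_mul]
    linarith [mul_lt_mul_of_pos_left hlt hb, mul_le_mul_of_nonneg_left h1 ha.le]

set_option maxHeartbeats 1600000 in
/-- The main one-sided estimate. -/
lemma side_bound
    (Q : Set (ℚ × ℚ)) (k : ℤ) (S : Finset (ℤ × ℤ))
    (hS : Q = convexHull ℚ (toQ '' (S : Set (ℤ × ℤ))))
    (h0 : (0:ℚ × ℚ) ∈ interior Q)
    (hvert : ∀ v ∈ vertices Q, ∃ p : ℤ × ℤ, Int.gcd p.1 p.2 = 1 ∧ v = toQ p)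
    (hmax : ∀ F η l, IsFacetWith Q η l F → l ≤ k)
    (hk : 2 ≤ k)
    (η ζ τ A : ℤ × ℤ) (l : ℤ) (F : Set (ℚ × ℚ))
    (hF : IsFacetWith Q η l F)
    (hζτ : ζ.1 * τ.1 + ζ.2 * τ.2 = 1)
    (hητ : η.1 * τ.1 + η.2 * τ.2 = 0)
    (hid : ∀ x : ℚ × ℚ, x = pairQ η x • toQ A + pairQ ζ x • toQ τ)
    (z : ℤ × ℤ) (hzS : z ∈ S) (μ : ℤ) (hμz : η.1 * z.1 + η.2 * z.2 = -μ) (hμ1 : 1 ≤ μ)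
    (w : ℤ × ℤ) (hwS : w ∈ S) (hwl : η.1 * w.1 + η.2 * w.2 = l)
    (W : ℤ) (hwW : ζ.1 * w.1 + ζ.2 * w.2 = W)
    (hWmax : ∀ x ∈ F, pairQ ζ x ≤ (W:ℚ)) :
    μ * W + l * (ζ.1 * z.1 + ζ.2 * z.2) ≤ k * (l + μ) ∧ (l = k → ¬ ((k:ℤ) ∣ W)) := by
  obtain ⟨hprimη, hlpos, hQle, hFdef, hFpts⟩ := hF
  have hF' : IsFacetWith Q η l F := ⟨hprimη, hlpos, hQle, hFdef, hFpts⟩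
  have hlk : l ≤ k := hmax F η l hF'
  have hQconv : Convex ℚ Q := by rw [hS]; exact convex_convexHull ℚ _
  have htoQmem : ∀ s ∈ S, toQ s ∈ Q := by
    intro s hs
    rw [hS]
    exact subset_convexHull ℚ _ (Set.mem_image_of_mem _ hs)
  have hpairηw : pairQ η (toQ w) = (l:ℚ) := by rw [pairQ_toQ, hwl]
  have hpairζw : pairQ ζ (toQ w) = (W:ℚ) := by rw [pairQ_toQ, hwW]
  have hpairηz : pairQ η (toQ z) = ((-μ : ℤ):ℚ) := by rw [pairQ_toQ, hμz]
  have hwQ : toQ w ∈ Q := htoQmem w hwS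
  have hzQ : toQ z ∈ Q := htoQmem z hzS
  have hwF : toQ w ∈ F := by rw [hFdef]; exact ⟨hwQ, hpairηw⟩
  -- w is an extreme point, hence primitive, hence IsCoprime l W
  have hwvert : toQ w ∈ vertices Q := by
    refine ⟨hwQ, ?_⟩
    intro x₁ hx₁ x₂ hx₂ hseg
    obtain ⟨a, b, ha, hb, hab, heq⟩ := hseg
    have hcombη : a * pairQ η x₁ + b * pairQ η x₂ = (l:ℚ) := by
      rw [← pairQ_comb, heq, hpairηw]
    have h1 : pairQ η x₁ ≤ l := hQle x₁ hx₁
    have h2 : pairQ η x₂ ≤ l := hQle x₂ hx₂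
    obtain ⟨he1, he2⟩ := combo_eq ha hb hab h1 h2 hcombη
    have hx₁F : x₁ ∈ F := by rw [hFdef]; exact ⟨hx₁, he1⟩
    have hx₂F : x₂ ∈ F := by rw [hFdef]; exact ⟨hx₂, he2⟩
    have ht1 : pairQ ζ x₁ ≤ W := hWmax x₁ hx₁F
    have ht2 : pairQ ζ x₂ ≤ W := hWmax x₂ hx₂F
    have hcombζ : a * pairQ ζ x₁ + b * pairQ ζ x₂ = (W:ℚ) := by
      rw [← pairQ_comb, heq, hpairζw]
    obtain ⟨he1', he2'⟩ := combo_eq ha hb hab ht1 ht2 hcombζ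
    suffices hboth : x₁ = toQ w ∧ x₂ = toQ w from hboth.1
    constructor
    · rw [hid x₁, hid (toQ w), he1, he1', hpairηw, hpairζw]
    · rw [hid x₂, hid (toQ w), he2, he2', hpairηw, hpairζw]
  obtain ⟨p, hpgcd, hpeq⟩ := hvert _ hwvert
  have hpw : p = w := toQ_injective hpeq.symm
  subst hpw
  have hcopw : IsCoprime p.1 p.2 := Int.isCoprime_iff_gcd_eq_one.mpr hpgcd
  have hidw := hid (toQ p)
  rw [hpairηw, hpairζw] at hidw
  have hw1 : p.1 = l * A.1 + W * τ.1 := by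
    have := congrArg Prod.fst hidw
    simp only [toQ, Prod.fst_add, Prod.smul_fst, smul_eq_mul] at this
    exact_mod_cast this
  have hw2 : p.2 = l * A.2 + W * τ.2 := by
    have := congrArg Prod.snd hidw
    simp only [toQ, Prod.snd_add, Prod.smul_snd, smul_eq_mul] at this
    exact_mod_cast this
  have hcoplW : IsCoprime l W := by
    obtain ⟨xx, yy, hxy⟩ := hcopw
    exact ⟨xx * A.1 + yy * A.2, xx * τ.1 + yy * τ.2, by linear_combination hxy - xx * hw1 - yy * hw2⟩
  constructor
  · -- main inequality
    by_contra hcon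
    push_neg at hcon
    set Z : ℤ := ζ.1 * z.1 + ζ.2 * z.2 with hZ
    -- construct the auxiliary facet H
    classical
    set Sm : Finset (ℤ × ℤ) := S.filter (fun s => η.1 * s.1 + η.2 * s.2 < l) with hSm
    have hzSm : z ∈ Sm := by
      rw [hSm, Finset.mem_filter]
      exact ⟨hzS, by omega⟩
    obtain ⟨st, hstSm, hstmax⟩ := Finset.exists_max_image Sm
      (fun s => ((ζ.1 * s.1 + ζ.2 * s.2 - W : ℤ):ℚ) / ((l - (η.1 * s.1 + η.2 * s.2) : ℤ):ℚ)) ⟨z, hzSm⟩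
    rw [hSm, Finset.mem_filter] at hstSm
    obtain ⟨hstS, hstl⟩ := hstSm
    set D : ℤ := l - (η.1 * st.1 + η.2 * st.2) with hD
    set N : ℤ := ζ.1 * st.1 + ζ.2 * st.2 - W with hN
    have hD1 : 1 ≤ D := by omega
    set u1 : ℤ := D * ζ.1 + N * η.1 with hu1def
    set u2 : ℤ := D * ζ.2 + N * η.2 with hu2def
    set c : ℤ := D * W + N * l with hc
    -- all generators satisfy the inequality
    have hdot : ∀ s ∈ S, u1 * s.1 + u2 * s.2 ≤ c := by
      intro s hs
      have hsl : η.1 * s.1 + η.2 * s.2 ≤ l := by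
        have := hQle (toQ s) (htoQmem s hs)
        rw [pairQ_toQ] at this
        exact_mod_cast this
      rcases eq_or_lt_of_le hsl with hsl' | hsl'
      · -- on the face: use hWmax
        have hsF : toQ s ∈ F := by
          rw [hFdef]
          exact ⟨htoQmem s hs, by rw [pairQ_toQ, hsl']⟩
        have hζs : ζ.1 * s.1 + ζ.2 * s.2 ≤ W := by
          have := hWmax _ hsF
          rw [pairQ_toQ] at this
          exact_mod_cast this
        rw [hu1def, hu2def, hc]
        nlinarith [mul_le_mul_of_nonneg_left hζs (show (0:ℤ) ≤ D by omega),
          (by rw [hsl'] : N * (η.1 * s.1 + η.2 * s.2) = N * l)]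
      · -- strictly below: use maximality of the slope
        have hsSm : s ∈ Sm := by rw [hSm, Finset.mem_filter]; exact ⟨hs, hsl'⟩
        have hσ := hstmax s hsSm
        have hp1 : (0:ℚ) < ((l - (η.1 * s.1 + η.2 * s.2) : ℤ):ℚ) := by
          have : (0:ℤ) < l - (η.1 * s.1 + η.2 * s.2) := by omega
          exact_mod_cast this
        have hp2 : (0:ℚ) < ((D:ℤ):ℚ) := by exact_mod_cast hD1.trans_lt' (by omega)
        rw [div_le_div_iff₀ hp1 (by exact_mod_cast (show (0:ℤ) < D by omega))] at hσ
        have hσ' : (ζ.1 * s.1 + ζ.2 * s.2 - W) * D ≤ N * (l - (η.1 * s.1 + η.2 * s.2)) := by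
          have : ((ζ.1 * s.1 + ζ.2 * s.2 - W : ℤ):ℚ) * ((D:ℤ):ℚ)
              ≤ ((N:ℤ):ℚ) * ((l - (η.1 * s.1 + η.2 * s.2) : ℤ):ℚ) := by
            convert hσ using 2 <;> push_cast <;> ring_nf <;> rfl
          exact_mod_cast this
        rw [hu1def, hu2def, hc]
        have hre : (D * ζ.1 + N * η.1) * s.1 + (D * ζ.2 + N * η.2) * s.2 - (D * W + N * l)
            = (ζ.1 * s.1 + ζ.2 * s.2 - W) * D - N * (l - (η.1 * s.1 + η.2 * s.2)) := by ring
        linarith [hσ', hre]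
    have hQu : ∀ y ∈ Q, pairQ (u1, u2) y ≤ (c:ℚ) := by
      rw [hS]
      apply hull_pair_le
      rintro x ⟨s, hs, rfl⟩
      rw [pairQ_toQ]
      have := hdot s (Finset.mem_coe.mp hs)
      exact_mod_cast this
    have huτ : u1 * τ.1 + u2 * τ.2 = D := by
      rw [hu1def, hu2def]; linear_combination D * hζτ + N * hητ
    have hune : (u1, u2) ≠ (0:ℤ × ℤ) := by
      intro h
      have h1 : u1 = 0 := congrArg Prod.fst h
      have h2 : u2 = 0 := congrArg Prod.snd h
      rw [h1, h2] at huτ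
      omega
    -- c is positive
    have hcpos : 0 < c := by
      obtain ⟨δ, hδ, hmem⟩ := exists_nudge h0 (toQ (u1, u2))
      rw [zero_add] at hmem
      have hval := hQu _ hmem
      rw [pairQ_smul, pairQ_toQ] at hval
      have hself : ((u1 * u1 + u2 * u2 : ℤ):ℚ) = ((u1:ℚ)^2 + (u2:ℚ)^2) := by push_cast; ring
      rw [hself] at hval
      have hsq := sq_sum_pos hune
      have : (0:ℚ) < (c:ℚ) := lt_of_lt_of_le (mul_pos hδ hsq) hval
      exact_mod_cast this
    set g : ℕ := Int.gcd u1 u2 with hg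
    have hgpos : 0 < g := by
      rw [hg, Int.gcd_pos_iff]
      by_contra hcon2
      push_neg at hcon2
      exact hune (by rw [Prod.mk.injEq]; exact ⟨hcon2.1, hcon2.2⟩)
    have hgd1 : ((g:ℤ)) ∣ u1 := Int.gcd_dvd_left u1 u2
    have hgd2 : ((g:ℤ)) ∣ u2 := Int.gcd_dvd_right u1 u2
    set ηH : ℤ × ℤ := (u1 / (g:ℤ), u2 / (g:ℤ)) with hηH
    have hη1 : ηH.1 * g = u1 := Int.ediv_mul_cancel hgd1
    have hη2 : ηH.2 * g = u2 := Int.ediv_mul_cancel hgd2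
    have hprimH : Int.gcd ηH.1 ηH.2 = 1 := Int.gcd_div_gcd_div_gcd hgpos
    have hgc : ((g:ℤ)) ∣ c := by
      have hcw : c = u1 * p.1 + u2 * p.2 := by
        rw [hu1def, hu2def, hc]; linear_combination (-D) * hwW + (-N) * hwl
      rw [hcw]
      exact dvd_add (hgd1.mul_right p.1) (hgd2.mul_right p.2)
    set lH : ℤ := c / (g:ℤ) with hlH
    have hlHg : lH * g = c := Int.ediv_mul_cancel hgc
    have hgZ : (0:ℤ) < (g:ℤ) := by exact_mod_cast hgpos
    have hlHpos : 0 < lH := by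
      rcases le_or_gt lH 0 with h | h
      · have := mul_le_mul_of_nonneg_right h hgZ.le
        rw [hlHg] at this
        simp only [zero_mul] at this
        omega
      · exact h
    have hfactor : ∀ y : ℚ × ℚ, pairQ (u1, u2) y = (g:ℚ) * pairQ ηH y := by
      intro y
      simp only [pairQ, hηH]
      have e1 : ((u1:ℤ):ℚ) = ((g:ℤ):ℚ) * ((u1 / (g:ℤ) : ℤ):ℚ) := by
        exact_mod_cast (by linarith [hη1] : u1 = (g:ℤ) * (u1 / (g:ℤ)))
      have e2 : ((u2:ℤ):ℚ) = ((g:ℤ):ℚ) * ((u2 / (g:ℤ) : ℤ):ℚ) := by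
        exact_mod_cast (by linarith [hη2] : u2 = (g:ℤ) * (u2 / (g:ℤ)))
      push_cast at e1 e2 ⊢
      rw [e1, e2]; ring
    have hgQ : (0:ℚ) < (g:ℚ) := by exact_mod_cast hgpos
    have hclH : (c:ℚ) = (g:ℚ) * (lH:ℚ) := by exact_mod_cast (by linarith [hlHg] : c = (g:ℤ) * lH)
    have hfacetsH : ∀ y ∈ Q, pairQ ηH y ≤ (lH:ℚ) := by
      intro y hy
      have := hQu y hy
      rw [hfactor, hclH] at this
      exact le_of_mul_le_mul_left this hgQ
    have hpairHw : pairQ ηH (toQ p) = (lH:ℚ) := by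
      have h1 : (g:ℚ) * pairQ ηH (toQ p) = (g:ℚ) * (lH:ℚ) := by
        rw [← hfactor, pairQ_toQ, ← hclH]
        have hcw : c = u1 * p.1 + u2 * p.2 := by
          rw [hu1def, hu2def, hc]; linear_combination (-D) * hwW + (-N) * hwl
        exact_mod_cast congrArg (fun t : ℤ => ((t:ℤ):ℚ)) hcw.symm
      exact mul_left_cancel₀ (ne_of_gt hgQ) h1
    have hpairHst : pairQ ηH (toQ st) = (lH:ℚ) := by
      have hcst : u1 * st.1 + u2 * st.2 = c := by
        rw [hu1def, hu2def, hc, hD, hN]; ring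
      have h1 : (g:ℚ) * pairQ ηH (toQ st) = (g:ℚ) * (lH:ℚ) := by
        rw [← hfactor, pairQ_toQ, ← hclH]
        exact_mod_cast congrArg (fun t : ℤ => ((t:ℤ):ℚ)) hcst
      exact mul_left_cancel₀ (ne_of_gt hgQ) h1
    have hne : toQ p ≠ toQ st := by
      intro h
      have := toQ_injective h
      rw [← this] at hstl
      omega
    set FH : Set (ℚ × ℚ) := {x ∈ Q | pairQ ηH x = (lH:ℚ)} with hFH
    have hH : IsFacetWith Q ηH lH FH :=
      ⟨hprimH, hlHpos, hfacetsH, rfl,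
        toQ p, ⟨hwQ, hpairHw⟩, toQ st, ⟨htoQmem st hstS, hpairHst⟩, hne⟩
    have hlHk : lH ≤ k := hmax FH ηH lH hH
    have hηHτ : 1 ≤ ηH.1 * τ.1 + ηH.2 * τ.2 := by
      have hdotg : (ηH.1 * τ.1 + ηH.2 * τ.2) * g = D := by
        linear_combination τ.1 * hη1 + τ.2 * hη2 + huτ
      rcases le_or_gt 1 (ηH.1 * τ.1 + ηH.2 * τ.2) with h | h
      · exact h
      · exfalso
        have h' : ηH.1 * τ.1 + ηH.2 * τ.2 ≤ 0 := by omega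
        have := mul_le_mul_of_nonneg_right h' hgZ.le
        rw [hdotg] at this
        simp only [zero_mul] at this
        omega
    -- the point P on the zero level
    have hlQ : (0:ℚ) < (l:ℚ) := by exact_mod_cast hlpos
    have hμQ : (0:ℚ) < (μ:ℚ) := by exact_mod_cast lt_of_lt_of_le one_pos hμ1
    have hlμ : (0:ℚ) < (l:ℚ) + (μ:ℚ) := by linarith
    set aa : ℚ := (μ:ℚ) / ((l:ℚ) + (μ:ℚ)) with haa
    set bb : ℚ := (l:ℚ) / ((l:ℚ) + (μ:ℚ)) with hbb
    have haapos : 0 < aa := div_pos hμQ hlμ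
    have hbbpos : 0 < bb := div_pos hlQ hlμ
    have habsum : aa + bb = 1 := by
      rw [haa, hbb, ← add_div, div_eq_one_iff_eq hlμ.ne']
      ring
    set P : ℚ × ℚ := aa • toQ p + bb • toQ z with hP
    have hPQ : P ∈ Q := hQconv hwQ hzQ haapos.le hbbpos.le habsum
    have hPη : pairQ η P = 0 := by
      rw [hP, pairQ_comb, hpairηw, hpairηz, haa, hbb]
      push_cast
      field_simp
      try ring
    have hpairζz : pairQ ζ (toQ z) = ((Z:ℤ):ℚ) := by rw [pairQ_toQ, hZ]
    have htP : pairQ ζ P = ((μ * W + l * Z : ℤ):ℚ) / ((l + μ : ℤ):ℚ) := by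
      rw [hP, pairQ_comb, hpairζw, hpairζz, haa, hbb]
      push_cast
      field_simp
      try ring
    have hkP : (k:ℚ) < pairQ ζ P := by
      rw [htP]
      rw [lt_div_iff₀ (by exact_mod_cast hlμ)]
      have hcon' : ((k * (l + μ) : ℤ):ℚ) < ((μ * W + l * Z : ℤ):ℚ) := by exact_mod_cast hcon
      push_cast
      push_cast at hcon'
      linarith
    have htPpos : 0 < pairQ ζ P := lt_trans (by exact_mod_cast lt_of_lt_of_le zero_lt_two hk) hkP
    have hPrep : P = pairQ ζ P • toQ τ := by
      have := hid P
      rwa [hPη, zero_smul, zero_add] at this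
    set cc : ℚ := (k:ℚ) / pairQ ζ P with hcc
    have hccpos : 0 < cc := div_pos (by exact_mod_cast lt_of_lt_of_le zero_lt_two hk) htPpos
    have hcclt : cc < 1 := (div_lt_one htPpos).mpr hkP
    have hkτ : (k:ℚ) • toQ τ = cc • P := by
      rw [hPrep, smul_smul, hcc, div_mul_cancel₀]
      exact ne_of_gt htPpos
    have hint : (k:ℚ) • toQ τ ∈ interior Q := by
      have := Convex.combo_interior_self_mem_interior hQconv h0 hPQ
        (show (0:ℚ) < 1 - cc by linarith) hccpos.le (by ring)
      rw [smul_zero, zero_add] at this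
      rwa [hkτ]
    have hηHne : ηH ≠ 0 := by
      intro h
      rw [h] at hprimH
      simp [Int.gcd] at hprimH
    have hlt := interior_pair_lt hηHne hfacetsH hint
    rw [pairQ_smul, pairQ_toQ] at hlt
    have hge : (k:ℚ) ≤ (k:ℚ) * ((ηH.1 * τ.1 + ηH.2 * τ.2 : ℤ):ℚ) := by
      have h1 : (1:ℚ) ≤ ((ηH.1 * τ.1 + ηH.2 * τ.2 : ℤ):ℚ) := by exact_mod_cast hηHτ
      have hkQ : (0:ℚ) < (k:ℚ) := by exact_mod_cast lt_of_lt_of_le zero_lt_two hk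
      exact le_mul_of_one_le_right hkQ.le h1
    have : (k:ℚ) < (lH:ℚ) := lt_of_le_of_lt hge hlt
    have : k < lH := by exact_mod_cast this
    omega
  · -- coprimality part
    intro hlk' hdvd
    obtain ⟨x, y, hxy⟩ := hcoplW
    have h1 : (k:ℤ) ∣ l := by rw [hlk']
    have h2 : (k:ℤ) ∣ x * l + y * W := dvd_add (h1.mul_left x) (hdvd.mul_left y)
    rw [hxy] at h2
    have := Int.le_of_dvd one_pos h2
    omega

end LDPAux

lemma final_arith {k l μ W V Z n : ℤ} (hk : 2 ≤ k) (hlpos : 0 < l) (hlk : l ≤ k)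
    (hμ1 : 1 ≤ μ) (hA1 : μ * W + l * Z ≤ k * (l + μ))
    (hA2 : μ * (-V) + l * (-Z) ≤ k * (l + μ))
    (hB1 : l = k → ¬((k:ℤ) ∣ W)) (hcount : n ≤ W - V + 1) : n ≤ 2 * k * (k + 1) := by
  by_contra hbig
  push_neg at hbig
  have hWV : 2 * k * (k + 1) ≤ W - V := by omega
  have e2 : μ * (W - V) ≤ 2 * k * (l + μ) := by nlinarith [hA1, hA2]
  have e1 : μ * (2 * k * (k + 1)) ≤ μ * (W - V) :=
    mul_le_mul_of_nonneg_left hWV (by omega)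
  have e3 : μ * (k + 1) ≤ l + μ := by
    by_contra hcc
    push_neg at hcc
    have h := mul_lt_mul_of_pos_left hcc (show (0:ℤ) < 2 * k by omega)
    nlinarith
  have hμk : μ * k ≤ l := by nlinarith
  have hμe : μ = 1 := by
    by_contra hcc
    have h2μ : (2:ℤ) ≤ μ := by omega
    have := mul_le_mul_of_nonneg_right h2μ (show (0:ℤ) ≤ k by omega)
    nlinarith
  have hlke : l = k := by
    rw [hμe] at hμk
    omega
  rw [hμe, hlke] at hA1 hA2
  have hWeq : W = k * (k + 1) - k * Z := by nlinarith [hA1, hA2, hWV]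
  exact hB1 hlke ⟨k + 1 - Z, by linarith⟩

open LDPAux in
/-- If `Q` is an LDP-polygon of maximal local index `m_Q ≥ 2`, then every facet `F`
of `Q` satisfies `|F ∩ ℤ²| ≤ 2·m_Q·(m_Q + 1)`. -/
theorem facet_lattice_points_ldp_bound
    (Q : Set (ℚ × ℚ)) (k : ℤ) (hQ : IsLDPPolygon Q) (hk : 2 ≤ k)
    (hmax : HasMaxLocalIndex Q k)
    (F : Set (ℚ × ℚ)) (η : ℤ × ℤ) (l : ℤ) (hF : IsFacetWith Q η l F) :
    (latticeCount F : ℤ) ≤ 2 * k * (k + 1) := by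
  classical
  obtain ⟨⟨⟨⟨S, hS⟩, -⟩, h0⟩, hvert⟩ := hQ
  obtain ⟨hprimη, hlpos, hQle, hFdef, hFpts⟩ := hF
  have hF' : IsFacetWith Q η l F := ⟨hprimη, hlpos, hQle, hFdef, hFpts⟩
  have hmax' := hmax.2
  have hlk : l ≤ k := hmax' F η l hF'
  -- Bezout data
  obtain ⟨a, b, hab⟩ : ∃ a b : ℤ, a * η.1 + b * η.2 = 1 := by
    obtain ⟨a, b, hab⟩ := Int.isCoprime_iff_gcd_eq_one.mpr hprimη
    exact ⟨a, b, hab⟩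
  have habQ : (a:ℚ) * (η.1:ℚ) + (b:ℚ) * (η.2:ℚ) = 1 := by exact_mod_cast hab
  set τ : ℤ × ℤ := (-η.2, η.1) with hτ
  set ζ : ℤ × ℤ := (-b, a) with hζ
  set A : ℤ × ℤ := (a, b) with hA
  set τ' : ℤ × ℤ := (η.2, -η.1) with hτ'
  set ζ' : ℤ × ℤ := (b, -a) with hζ'
  have hζτ : ζ.1 * τ.1 + ζ.2 * τ.2 = 1 := by
    rw [hζ, hτ]; dsimp; linear_combination hab
  have hητ : η.1 * τ.1 + η.2 * τ.2 = 0 := by rw [hτ]; dsimp; ring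
  have hζτ' : ζ'.1 * τ'.1 + ζ'.2 * τ'.2 = 1 := by
    rw [hζ', hτ']; dsimp; linear_combination hab
  have hητ' : η.1 * τ'.1 + η.2 * τ'.2 = 0 := by rw [hτ']; dsimp; ring
  have hid : ∀ x : ℚ × ℚ, x = pairQ η x • toQ A + pairQ ζ x • toQ τ := by
    intro x
    rw [hA, hζ, hτ]
    apply Prod.ext <;>
      simp only [pairQ, toQ, Prod.smul_fst, Prod.smul_snd, Prod.fst_add, Prod.snd_add,
        smul_eq_mul] <;> push_cast
    · linear_combination (-x.1) * habQ
    · linear_combination (-x.2) * habQ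
  have hid' : ∀ x : ℚ × ℚ, x = pairQ η x • toQ A + pairQ ζ' x • toQ τ' := by
    intro x
    rw [hA, hζ', hτ']
    apply Prod.ext <;>
      simp only [pairQ, toQ, Prod.smul_fst, Prod.smul_snd, Prod.fst_add, Prod.snd_add,
        smul_eq_mul] <;> push_cast
    · linear_combination (-x.1) * habQ
    · linear_combination (-x.2) * habQ
  have hζ'neg : ∀ x : ℚ × ℚ, pairQ ζ' x = - pairQ ζ x := by
    intro x
    rw [hζ, hζ']
    simp only [pairQ]
    push_cast
    ring
  -- a generator strictly below level 0
  have htoQmem : ∀ s ∈ S, toQ s ∈ Q := by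
    intro s hs
    rw [hS]
    exact subset_convexHull ℚ _ (Set.mem_image_of_mem _ hs)
  obtain ⟨z, hzS, hzneg⟩ : ∃ z ∈ S, η.1 * z.1 + η.2 * z.2 < 0 := by
    obtain ⟨δ, hδ, hδQ⟩ := exists_nudge h0 (-(toQ η))
    rw [zero_add] at hδQ
    by_contra hcon
    push_neg at hcon
    have hge : ∀ x ∈ convexHull ℚ (toQ '' (S : Set (ℤ × ℤ))), (0:ℚ) ≤ pairQ η x := by
      apply hull_pair_ge
      rintro x ⟨s, hs, rfl⟩
      rw [pairQ_toQ]
      exact_mod_cast hcon s (Finset.mem_coe.mp hs)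
    have hmem : δ • -(toQ η) ∈ convexHull ℚ (toQ '' (S : Set (ℤ × ℤ))) := by rw [← hS]; exact hδQ
    have hval := hge _ hmem
    rw [smul_neg, ← smul_neg, pairQ_smul] at hval
    have hpos := sq_sum_pos (p := η) (by
      intro h
      rw [h] at hprimη
      simp [Int.gcd] at hprimη)
    have : pairQ η (-(toQ η)) = -((η.1:ℚ)^2 + (η.2:ℚ)^2) := by
      simp only [pairQ, toQ, Prod.fst_neg, Prod.snd_neg]
      push_cast
      ring
    rw [this] at hval
    nlinarith
  set μ : ℤ := -(η.1 * z.1 + η.2 * z.2) with hμ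
  have hμz : η.1 * z.1 + η.2 * z.2 = -μ := by omega
  have hμ1 : 1 ≤ μ := by omega
  set Z : ℤ := ζ.1 * z.1 + ζ.2 * z.2 with hZ
  -- the face generators
  set T : Finset (ℤ × ℤ) := S.filter (fun s => η.1 * s.1 + η.2 * s.2 = l) with hT
  have hgenle : ∀ s ∈ S, pairQ η (toQ s) ≤ (l:ℚ) := fun s hs => hQle _ (htoQmem s hs)
  have hFhull : ∀ x ∈ F, x ∈ convexHull ℚ (toQ '' (T : Set (ℤ × ℤ))) := by
    intro x hx
    rw [hFdef] at hx
    exact face_subset_hull S η l hgenle x (by rw [← hS]; exact hx.1) hx.2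
  have hTne : T.Nonempty := by
    obtain ⟨x0, hx0, -⟩ := hFpts
    have := hFhull x0 hx0
    by_contra hcon
    rw [Finset.not_nonempty_iff_eq_empty] at hcon
    rw [hcon] at this
    simp at this
  obtain ⟨w, hwT, hwmax⟩ := Finset.exists_max_image T (fun s => ζ.1 * s.1 + ζ.2 * s.2) hTne
  obtain ⟨v, hvT, hvmin⟩ := Finset.exists_min_image T (fun s => ζ.1 * s.1 + ζ.2 * s.2) hTne
  rw [hT, Finset.mem_filter] at hwT hvT
  set W : ℤ := ζ.1 * w.1 + ζ.2 * w.2 with hW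
  set V : ℤ := ζ.1 * v.1 + ζ.2 * v.2 with hV
  have hWmax : ∀ x ∈ F, pairQ ζ x ≤ (W:ℚ) := by
    intro x hx
    refine hull_pair_le ζ W _ ?_ x (hFhull x hx)
    rintro y ⟨s, hs, rfl⟩
    rw [pairQ_toQ]
    have hsT : s ∈ T := Finset.mem_coe.mp hs
    have := hwmax s hsT
    exact_mod_cast this
  have hVmin : ∀ x ∈ F, (V:ℚ) ≤ pairQ ζ x := by
    intro x hx
    refine hull_pair_ge ζ V _ ?_ x (hFhull x hx)
    rintro y ⟨s, hs, rfl⟩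
    rw [pairQ_toQ]
    have hsT : s ∈ T := Finset.mem_coe.mp hs
    have := hvmin s hsT
    exact_mod_cast this
  have hWmax' : ∀ x ∈ F, pairQ ζ' x ≤ ((-V : ℤ):ℚ) := by
    intro x hx
    rw [hζ'neg]
    have := hVmin x hx
    push_cast
    linarith
  -- the two side bounds
  have hside1 := side_bound Q k S hS h0 hvert hmax' hk η ζ τ A l F hF' hζτ hητ hid
    z hzS μ hμz hμ1 w hwT.1 hwT.2 W hW.symm hWmax
  have hside2 := side_bound Q k S hS h0 hvert hmax' hk η ζ' τ' A l F hF' hζτ' hητ' hid'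
    z hzS μ hμz hμ1 v hvT.1 hvT.2 (-V) (by rw [hζ', hV]; dsimp; ring) hWmax'
  obtain ⟨hA1, hB1⟩ := hside1
  obtain ⟨hA2, -⟩ := hside2
  rw [← hZ] at hA1
  have hZ' : ζ'.1 * z.1 + ζ'.2 * z.2 = -Z := by rw [hζ', hZ]; dsimp; ring
  rw [hZ'] at hA2
  -- counting lattice points on F
  have hVW : V ≤ W := by
    have h1 := hvmin w (by rw [hT, Finset.mem_filter]; exact hwT)
    exact h1
  have hcount : (latticeCount F : ℤ) ≤ W - V + 1 := by
    have hXsub : {p : ℤ × ℤ | toQ p ∈ F} ⊆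
        (fun j : ℤ => (l * A.1 + j * τ.1, l * A.2 + j * τ.2)) '' (Set.Icc V W) := by
      intro q hq
      have hqF : toQ q ∈ F := hq
      have hqQ : toQ q ∈ Q := by rw [hFdef] at hqF; exact hqF.1
      have hqη : η.1 * q.1 + η.2 * q.2 = l := by
        rw [hFdef] at hqF
        have := hqF.2
        rw [pairQ_toQ] at this
        exact_mod_cast this
      set j : ℤ := ζ.1 * q.1 + ζ.2 * q.2 with hj
      have hjV : V ≤ j := by
        have := hVmin _ hqF
        rw [pairQ_toQ] at this
        exact_mod_cast this
      have hjW : j ≤ W := by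
        have := hWmax _ hqF
        rw [pairQ_toQ] at this
        exact_mod_cast this
      refine ⟨j, ⟨hjV, hjW⟩, ?_⟩
      have hidq := hid (toQ q)
      rw [show pairQ η (toQ q) = (l:ℚ) by rw [pairQ_toQ]; exact_mod_cast congrArg (fun t : ℤ => (t:ℚ)) hqη,
        show pairQ ζ (toQ q) = (j:ℚ) by rw [pairQ_toQ]] at hidq
      have h1 := congrArg Prod.fst hidq
      have h2 := congrArg Prod.snd hidq
      simp only [toQ, Prod.fst_add, Prod.snd_add, Prod.smul_fst, Prod.smul_snd, smul_eq_mul] at h1 h2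
      have e1 : q.1 = l * A.1 + j * τ.1 := by exact_mod_cast h1
      have e2 : q.2 = l * A.2 + j * τ.2 := by exact_mod_cast h2
      show (l * A.1 + j * τ.1, l * A.2 + j * τ.2) = q
      exact Prod.ext e1.symm e2.symm
    have hfin : (Set.Icc V W).Finite := Set.finite_Icc V W
    have hn1 : latticeCount F ≤ ((fun j : ℤ => (l * A.1 + j * τ.1, l * A.2 + j * τ.2)) '' (Set.Icc V W)).ncard :=
      Set.ncard_le_ncard hXsub (hfin.image _)
    have hn2 := Set.ncard_image_le (s := Set.Icc V W)
      (f := fun j : ℤ => (l * A.1 + j * τ.1, l * A.2 + j * τ.2)) hfin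
    have hn3 : (Set.Icc V W).ncard = (W + 1 - V).toNat := by
      rw [← Finset.coe_Icc, Set.ncard_coe_finset, Int.card_Icc]
    have : latticeCount F ≤ (W + 1 - V).toNat := le_trans hn1 (le_trans hn2 (le_of_eq hn3))
    have hcast : (((W + 1 - V).toNat : ℤ)) = W + 1 - V := Int.toNat_of_nonneg (by omega)
    have := (Int.ofNat_le.mpr this : (latticeCount F : ℤ) ≤ ((W + 1 - V).toNat : ℤ))
    omega
  exact final_arith hk hlpos hlk hμ1 hA1 hA2 hB1 hcount
end

section
/- Let Q be a centrally symmetric IP-polygon (i.e. Q = −Q) of order o_Q = I. Then Vol(Q) ≤ 8I², where Vol denotes the normalized volume (twice the Euclidean area). -/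
open Pointwise

open MeasureTheory

/-- The embedding of `ℚ²` into `ℝ²`. -/
noncomputable def eR (x : ℚ × ℚ) : ℝ × ℝ := ((x.1 : ℝ), (x.2 : ℝ))

theorem dist_eR (u v : ℚ × ℚ) : dist (eR u) (eR v) = dist u v := by
  simp only [eR, Prod.dist_eq, Rat.dist_cast]

theorem eR_combo (a b : ℚ) (x y : ℚ × ℚ) :
    eR (a • x + b • y) = (a : ℝ) • eR x + (b : ℝ) • eR y := by
  simp only [eR, Prod.smul_fst, Prod.smul_snd, Prod.fst_add, Prod.snd_add, Prod.mk_add_mk,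
    Prod.smul_mk, smul_eq_mul]
  push_cast
  rfl

theorem eR_smul (q : ℚ) (w : ℚ × ℚ) : eR (q • w) = (q : ℝ) • eR w := by
  have := eR_combo q 0 w 0
  simpa using this

theorem eR_image_smul (q : ℚ) (A : Set (ℚ × ℚ)) : eR '' (q • A) = (q : ℝ) • (eR '' A) := by
  ext z
  simp only [Set.mem_image, Set.mem_smul_set]
  constructor
  · rintro ⟨y, ⟨w, hw, rfl⟩, rfl⟩
    exact ⟨eR w, ⟨w, hw, rfl⟩, (eR_smul q w).symm⟩
  · rintro ⟨y2, ⟨w, hw, rfl⟩, rfl⟩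
    exact ⟨q • w, ⟨w, hw, rfl⟩, eR_smul q w⟩

theorem mink (s : Set (ℝ × ℝ)) (hsymm : ∀ x ∈ s, -x ∈ s) (hconv : Convex ℝ s)
    (hvol : 4 < volume s) : ∃ p : ℤ × ℤ, p ≠ 0 ∧ ((p.1 : ℝ), (p.2 : ℝ)) ∈ s := by
  classical
  set b := Module.Basis.finTwoProd ℝ with hb
  have fund := ZSpan.isAddFundamentalDomain' b volume
  have hcnt : Countable (Submodule.span ℤ (Set.range b)).toAddSubgroup := by
    change Countable (Submodule.span ℤ (Set.range b))
    infer_instance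
  have hFD : ZSpan.fundamentalDomain b = Set.Ico (0:ℝ) 1 ×ˢ Set.Ico (0:ℝ) 1 := by
    ext m
    simp [ZSpan.mem_fundamentalDomain, Module.Basis.coe_finTwoProd_repr, Fin.forall_fin_two,
      Set.mem_prod, hb]
  have hvolF : volume (ZSpan.fundamentalDomain b) = 1 := by
    rw [hFD, Measure.volume_eq_prod, Measure.prod_prod, Real.volume_Ico]
    simp
  have hrank : Module.finrank ℝ (ℝ × ℝ) = 2 := by simp
  have key : volume (ZSpan.fundamentalDomain b) * 2 ^ Module.finrank ℝ (ℝ × ℝ) < volume s := by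
    rw [hvolF, hrank, one_mul]
    have : (2 : ENNReal) ^ 2 = 4 := by norm_num
    rw [this]; exact hvol
  obtain ⟨⟨x, hx⟩, hnz, hmem⟩ :=
    exists_ne_zero_mem_lattice_of_measure_mul_two_pow_lt_measure fund hsymm hconv key
  rw [Submodule.mem_toAddSubgroup, (b.mem_span_iff_repr_mem ℤ x)] at hx
  have h1 := hx 0
  have h2 := hx 1
  simp [Module.Basis.coe_finTwoProd_repr, hb] at h1 h2
  obtain ⟨z1, hz1⟩ := h1
  obtain ⟨z2, hz2⟩ := h2
  have hxval : x = ((z1:ℝ), (z2:ℝ)) := by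
    exact Prod.ext hz1.symm hz2.symm
  have hxne : x ≠ 0 := by
    intro h0
    exact hnz (Subtype.ext h0)
  refine ⟨(z1, z2), ?_, by rw [← hxval]; exact hmem⟩
  intro h0
  apply hxne
  rw [hxval]
  have h1 : z1 = 0 := congrArg Prod.fst h0
  have h2 : z2 = 0 := congrArg Prod.snd h0
  simp [h1, h2]

theorem qconvex_closure {s : Set (ℝ × ℝ)}
    (h : ∀ θ : ℚ, 0 ≤ θ → θ ≤ 1 → ∀ a ∈ s, ∀ b ∈ s, (θ:ℝ) • a + (1 - (θ:ℝ)) • b ∈ s) :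
    Convex ℝ (closure s) := by
  intro x hx y hy α β hα hβ hαβ
  have hβ' : β = 1 - α := by linarith
  subst hβ'
  have hα1 : α ≤ 1 := by linarith
  set C : Set ℝ := (fun θ : ℝ => θ • x + (1-θ) • y) ⁻¹' (closure s) with hC
  have hclosed : IsClosed C :=
    IsClosed.preimage (by fun_prop) isClosed_closure
  have hrat : ∀ θ : ℚ, 0 ≤ θ → θ ≤ 1 → (θ:ℝ) ∈ C := by
    intro θ h0 h1
    have hmap : Set.MapsTo (fun p : (ℝ×ℝ) × (ℝ×ℝ) => (θ:ℝ) • p.1 + (1-(θ:ℝ)) • p.2)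
        (s ×ˢ s) s := by
      rintro ⟨a, b⟩ ⟨ha, hb⟩
      exact h θ h0 h1 a ha b hb
    have := hmap.closure (by fun_prop)
    have hxy : (x, y) ∈ closure (s ×ˢ s) := by rw [closure_prod_eq]; exact ⟨hx, hy⟩
    exact this hxy
  have hsub : closure ((fun q:ℚ => (q:ℝ)) '' {q : ℚ | 0 ≤ q ∧ q ≤ 1}) ⊆ C := by
    apply closure_minimal _ hclosed
    rintro _ ⟨q, ⟨h0, h1⟩, rfl⟩
    exact hrat q h0 h1
  have hmem : α ∈ closure ((fun q:ℚ => (q:ℝ)) '' {q : ℚ | 0 ≤ q ∧ q ≤ 1}) := by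
    rw [Metric.mem_closure_iff]
    intro ε hε
    obtain ⟨q₀, hq1, hq2⟩ := exists_rat_btwn (show α - ε < α by linarith)
    refine ⟨((max 0 q₀ : ℚ) : ℝ), ⟨max 0 q₀, ⟨le_max_left _ _, ?_⟩, rfl⟩, ?_⟩
    · refine max_le (by norm_num) ?_
      have : (q₀ : ℝ) ≤ 1 := le_trans hq2.le hα1
      exact_mod_cast this
    · rw [Real.dist_eq]
      rcases le_or_gt 0 q₀ with hq0 | hq0
      · rw [max_eq_right hq0]
        rw [abs_lt]
        constructor <;> [linarith; linarith]
      · rw [max_eq_left hq0.le]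
        push_cast
        rw [abs_lt]
        have : (q₀:ℝ) < 0 := by exact_mod_cast hq0
        constructor <;> linarith
  have := hsub hmem
  exact this

theorem core_lemma {Q₁ : Set (ℚ × ℚ)} (hconv : Convex ℚ Q₁)
    (h0 : (0:ℚ×ℚ) ∈ interior Q₁) {c : ℚ} (hc0 : 0 ≤ c) (hc1 : c < 1)
    {x : ℚ × ℚ} (hx : eR x ∈ closure (eR '' (c • Q₁))) :
    x ∈ interior Q₁ := by
  obtain ⟨ε, hε, hball⟩ := Metric.isOpen_iff.mp isOpen_interior 0 h0
  replace hball : Metric.ball (0:ℚ×ℚ) ε ⊆ Q₁ := hball.trans interior_subset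
  have hc1' : (0:ℝ) < 1 - (c:ℝ) := by
    have : (c:ℝ) < 1 := by exact_mod_cast hc1
    linarith
  have hεc : (0:ℝ) < (1 - (c:ℝ)) * ε := by positivity
  obtain ⟨b, hb, hdist⟩ := Metric.mem_closure_iff.mp hx _ hεc
  obtain ⟨y, hy, rfl⟩ := hb
  obtain ⟨w, hw, rfl⟩ := hy
  rw [dist_eR] at hdist
  set ρ : ℝ := (1 - (c:ℝ)) * ε - dist x (c • w) with hρ
  have hρpos : 0 < ρ := by rw [hρ]; linarith
  apply mem_interior.mpr
  refine ⟨Metric.ball x ρ, ?_, Metric.isOpen_ball, Metric.mem_ball_self hρpos⟩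
  intro z hz
  have hdz : dist z (c • w) < (1 - (c:ℝ)) * ε := by
    calc dist z (c • w) ≤ dist z x + dist x (c • w) := dist_triangle _ _ _
    _ < ρ + dist x (c • w) := by have := Metric.mem_ball.mp hz; linarith [this]
    _ = (1 - (c:ℝ)) * ε := by rw [hρ]; ring
  set u : ℚ × ℚ := (1 - c)⁻¹ • (z - c • w) with hu
  have hcne : (1 - c) ≠ 0 := by
    intro h; rw [sub_eq_zero] at h; exact absurd h.symm (ne_of_lt hc1)
  have hunorm : dist u 0 < ε := by
    rw [dist_zero_right, hu, norm_smul]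
    have h1 : ‖(1 - c)⁻¹‖ = ((1:ℝ) - (c:ℝ))⁻¹ := by
      rw [← Rat.norm_cast_real]
      push_cast
      rw [Real.norm_eq_abs, abs_of_pos (by positivity)]
    rw [h1, ← dist_eq_norm]
    rw [inv_mul_lt_iff₀ hc1']
    calc dist z (c • w) < (1 - (c:ℝ)) * ε := hdz
    _ = (1 - ↑c) * ε := by ring
  have humem : u ∈ Q₁ := hball (Metric.mem_ball.mpr (by simpa [dist_zero_right] using hunorm))
  have hzeq : z = c • w + (1 - c) • u := by
    rw [hu, smul_inv_smul₀ hcne]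
    ring_nf
  rw [hzeq]
  exact hconv hw humem hc0 (by linarith [hc1.le] : (0:ℚ) ≤ 1 - c) (by ring)

/-- Minkowski bound: a centrally symmetric IP-polygon of order `I` satisfies
`Vol(Q) ≤ 8I²`. -/
theorem centrally_symmetric_volume_bound
    (Q : Set (ℚ × ℚ)) (I : ℤ) (hQ : IsIPPolygon Q) (hsym : Q = -Q)
    (hI : HasOrder Q I) :
    nVol Q ≤ 8 * (I : ℝ) ^ 2 := by
  classical
  by_contra hcon
  push_neg at hcon
  obtain ⟨⟨⟨S, hQS⟩, -⟩, h0Q⟩ := hQ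
  obtain ⟨hI1, hIno, -⟩ := hI
  have hQconv : Convex ℚ Q := hQS ▸ convex_convexHull ℚ _
  set K : Set (ℝ × ℝ) := closure (eR '' Q) with hK
  have hnVol : nVol Q = 2 * (volume K).toReal := rfl
  -- K is contained in a compact set
  set P : Set (ℝ × ℝ) := convexHull ℝ (eR '' (toQ '' (S : Set (ℤ × ℤ)))) with hP
  have hPcpt : IsCompact P := ((S.finite_toSet.image toQ).image eR).isCompact_convexHull ℝ
  have hKP : K ⊆ P := by
    apply closure_minimal _ hPcpt.isClosed
    have hQsub : Q ⊆ eR ⁻¹' P := by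
      rw [hQS]
      apply convexHull_min
      · intro v hv
        exact subset_convexHull ℝ _ (Set.mem_image_of_mem eR hv)
      · intro x hx y hy a b ha hb hab
        have : eR (a • x + b • y) = (a : ℝ) • eR x + (b : ℝ) • eR y := eR_combo a b x y
        simp only [Set.mem_preimage] at hx hy ⊢
        rw [this]
        exact (convex_convexHull ℝ _) hx hy (by exact_mod_cast ha) (by exact_mod_cast hb)
          (by exact_mod_cast congrArg (Rat.cast : ℚ → ℝ) hab)
    rintro _ ⟨u, hu, rfl⟩
    exact hQsub hu
  have hKfin : volume K ≠ ⊤ := ne_top_of_le_ne_top hPcpt.measure_lt_top.ne (measure_mono hKP)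
  -- K is convex
  have hKconv : Convex ℝ K := by
    apply qconvex_closure
    intro θ h0 h1 a ha b hb
    obtain ⟨u, hu, rfl⟩ := ha
    obtain ⟨v, hv, rfl⟩ := hb
    refine ⟨θ • u + (1 - θ) • v, hQconv hu hv h0 (by linarith) (by ring), ?_⟩
    rw [eR_combo]
    push_cast
    ring_nf
  -- K is symmetric
  have hKsymm : ∀ z ∈ K, -z ∈ K := by
    have hmap : Set.MapsTo (fun w : ℝ × ℝ => -w) (eR '' Q) (eR '' Q) := by
      rintro _ ⟨u, hu, rfl⟩
      refine ⟨-u, ?_, by simp [eR, Prod.ext_iff]⟩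
      rw [hsym]
      exact Set.neg_mem_neg.mpr hu
    exact fun z hz => hmap.closure continuous_neg hz
  -- pick a good rational scaling factor
  set A : ℝ := (volume K).toReal with hA
  have hA4 : 4 * (I : ℝ) ^ 2 < A := by
    rw [hnVol] at hcon
    linarith
  have hIpos : (0:ℝ) < (I : ℝ) := by
    have : (1:ℤ) ≤ I := hI1
    exact_mod_cast lt_of_lt_of_le zero_lt_one (by exact_mod_cast this)
  have hApos : (0:ℝ) < A := by nlinarith
  have hsqrt : 2 * (I : ℝ) < Real.sqrt A := by
    rw [show (2 * (I:ℝ)) = ((2 * I : ℝ)) by ring] at *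
    have h2I : (0:ℝ) ≤ 2 * I := by positivity
    rw [show Real.sqrt A = Real.sqrt A from rfl]
    have := (Real.lt_sqrt h2I).mpr (by nlinarith : (2 * (I:ℝ))^2 < A)
    exact this
  have hsqrtpos : (0:ℝ) < Real.sqrt A := lt_trans (by positivity) hsqrt
  have hlt : 2 / Real.sqrt A < 1 / (I : ℝ) := by
    rw [div_lt_div_iff₀ hsqrtpos hIpos]
    linarith
  obtain ⟨q, hq1, hq2⟩ := exists_rat_btwn hlt
  have hqpos : (0:ℚ) < q := by
    have : (0:ℝ) < (q:ℝ) := lt_trans (by positivity) hq1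
    exact_mod_cast this
  -- the scaled body
  set s : Set (ℝ × ℝ) := (q : ℝ) • K with hs
  have hssymm : ∀ x ∈ s, -x ∈ s := by
    rintro _ ⟨k, hk, rfl⟩
    refine ⟨-k, hKsymm k hk, ?_⟩
    show (q:ℝ) • -k = -((q:ℝ) • k)
    exact smul_neg _ _
  have hsconv : Convex ℝ s := hKconv.smul _
  have hsvol : 4 < volume s := by
    have hscale : volume s = ENNReal.ofReal ((q:ℝ) ^ 2) * volume K := by
      rw [hs]
      have := MeasureTheory.Measure.addHaar_smul_of_nonneg volume
        (le_of_lt (by exact_mod_cast hqpos : (0:ℝ) < (q:ℝ))) K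
      rwa [show Module.finrank ℝ (ℝ × ℝ) = 2 by simp] at this
    rw [hscale, ← ENNReal.ofReal_toReal hKfin, ← hA, ← ENNReal.ofReal_mul (by positivity)]
    have h4 : (4 : ENNReal) = ENNReal.ofReal 4 := by norm_num
    rw [h4]
    apply ENNReal.ofReal_lt_ofReal_iff_of_nonneg (by norm_num) |>.mpr
    have h2q : 2 < (q:ℝ) * Real.sqrt A := by
      rw [div_lt_iff₀ hsqrtpos] at hq1
      linarith
    have : (2:ℝ)^2 < ((q:ℝ) * Real.sqrt A)^2 := by
      apply pow_lt_pow_left₀ h2q (by norm_num) (by norm_num)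
    calc (4:ℝ) = 2^2 := by norm_num
    _ < ((q:ℝ) * Real.sqrt A)^2 := this
    _ = (q:ℝ)^2 * A := by
        rw [mul_pow, Real.sq_sqrt hApos.le]
  obtain ⟨p, hpne, hpmem⟩ := mink s hssymm hsconv hsvol
  -- transfer back to ℚ²
  have hIQne : ((I : ℚ)) ≠ 0 := by
    have : (0:ℚ) < (I:ℚ) := by exact_mod_cast (lt_of_lt_of_le zero_lt_one hI1)
    exact this.ne'
  have hqne : (q : ℝ) ≠ 0 := by exact_mod_cast hqpos.ne'
  have hclos : s = closure (eR '' ((q : ℚ) • Q)) := by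
    rw [hs, eR_image_smul, closure_smul₀]
  set c : ℚ := q * (I : ℚ) with hc
  have hcQ : c • (((I : ℚ))⁻¹ • Q) = (q : ℚ) • Q := by
    rw [smul_smul, hc, mul_assoc, mul_inv_cancel₀ hIQne, mul_one]
  have hQ1conv : Convex ℚ (((I : ℚ))⁻¹ • Q) := hQconv.smul _
  have h0Q1 : (0 : ℚ × ℚ) ∈ interior (((I : ℚ))⁻¹ • Q) := by
    rw [interior_smul₀ (inv_ne_zero hIQne)]
    have := Set.smul_mem_smul_set (a := ((I : ℚ))⁻¹) h0Q
    rwa [smul_zero] at this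
  have hc0 : 0 ≤ c := by
    rw [hc]
    have h01 : (0:ℚ) ≤ (I:ℚ) := by
      have : (0:ℤ) ≤ I := le_trans zero_le_one hI1
      exact_mod_cast this
    positivity
  have hc1 : c < 1 := by
    have : (q:ℝ) * (I:ℝ) < 1 := by
      rw [show (1:ℝ)/(I:ℝ) = (I:ℝ)⁻¹ by ring] at hq2
      rw [← lt_div_iff₀ hIpos]
      calc (q:ℝ) < (I:ℝ)⁻¹ := hq2
      _ = 1 / (I:ℝ) := by ring
    have h' : ((c : ℚ) : ℝ) < 1 := by
      rw [hc]
      push_cast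
      exact this
    exact_mod_cast h'
  have hxmem : eR (toQ p) ∈ closure (eR '' (c • (((I : ℚ))⁻¹ • Q))) := by
    rw [hcQ, ← hclos]
    have : eR (toQ p) = ((p.1 : ℝ), (p.2 : ℝ)) := by
      simp [eR, toQ]
    rw [this]
    exact hpmem
  have hint := core_lemma hQ1conv h0Q1 hc0 hc1 hxmem
  exact hpne (hIno p hint)
end

section
/- Let Q be an LDP-polygon and let T be an LDP-sub-triangle of Q, i.e. T is the convex hull of three vertices of Q and contains the origin in its interior. Then T is unimodularly equivalent to a triangle with vertices (1,0), (p,q), and (x,y) satisfying gcd(p,q) = 1, gcd(x,y) = 1, 0 ≤ p < q ≤ Vol(Q) − 2, −q ≤ y < 0, and yp − q ≤ xq < yp. -/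
open Pointwise

namespace LDPaux
open MeasureTheory


def detI (a b : ℤ × ℤ) : ℤ := a.1 * b.2 - a.2 * b.1

/-- a halfspace through 0 is convex (generic). -/
lemma halfspace_convex {K : Type*} [Field K] [LinearOrder K] [IsStrictOrderedRing K] (r s : K) :
    Convex K {z : K × K | 0 ≤ r * z.1 + s * z.2} := by
  intro x hx y hy a b ha hb hab
  simp only [Set.mem_setOf_eq] at *
  have h1 : (a • x + b • y).1 = a * x.1 + b * y.1 := rfl
  have h2 : (a • x + b • y).2 = a * x.2 + b * y.2 := rfl
  rw [h1, h2]
  nlinarith [mul_nonneg ha hx, mul_nonneg hb hy]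

/-- 0 is not an interior point of a set contained in a halfspace with
nontrivial normal. -/
lemma not_mem_interior_halfspace (r s : ℚ) (hrs : ¬(r = 0 ∧ s = 0))
    (S : Set (ℚ × ℚ)) (hS : S ⊆ {z : ℚ × ℚ | 0 ≤ r * z.1 + s * z.2}) :
    (0 : ℚ × ℚ) ∉ interior S := by
  intro h
  rw [mem_interior_iff_mem_nhds, Metric.mem_nhds_iff] at h
  obtain ⟨ε, hε, hball⟩ := h
  obtain ⟨δ, hδ0, hδε⟩ := exists_rat_btwn hε
  have hδ0' : (0:ℚ) < δ := by exact_mod_cast hδ0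
  set t : ℚ := δ / (|r| + |s| + 1) with ht
  have hden : (0:ℚ) < |r| + |s| + 1 := by positivity
  have ht0 : 0 < t := by positivity
  have hz : ((-(t*r), -(t*s)) : ℚ × ℚ) ∈ Metric.ball (0 : ℚ × ℚ) ε := by
    rw [Metric.mem_ball, Prod.dist_eq]
    have h1 : dist (-(t*r)) (0:ℚ) < ε := by
      rw [Rat.dist_eq]
      have : |((-(t*r) : ℚ) : ℝ) - ((0:ℚ):ℝ)| = ((|t*r| : ℚ) : ℝ) := by
        push_cast; rw [sub_zero, abs_neg]
      rw [this]
      refine lt_of_lt_of_le ?_ hδε.le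
      have : |t * r| < δ := by
        rw [abs_mul, abs_of_pos ht0, ht]
        rw [div_mul_eq_mul_div, div_lt_iff₀ hden]
        nlinarith [abs_nonneg r, abs_nonneg s]
      exact_mod_cast this
    have h2 : dist (-(t*s)) (0:ℚ) < ε := by
      rw [Rat.dist_eq]
      have : |((-(t*s) : ℚ) : ℝ) - ((0:ℚ):ℝ)| = ((|t*s| : ℚ) : ℝ) := by
        push_cast; rw [sub_zero, abs_neg]
      rw [this]
      refine lt_of_lt_of_le ?_ hδε.le
      have : |t * s| < δ := by
        rw [abs_mul, abs_of_pos ht0, ht]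
        rw [div_mul_eq_mul_div, div_lt_iff₀ hden]
        nlinarith [abs_nonneg r, abs_nonneg s]
      exact_mod_cast this
    exact max_lt h1 h2
  have hmem := hS (hball hz)
  simp only [Set.mem_setOf_eq] at hmem
  have hr2 : 0 < r * r + s * s := by
    rcases not_and_or.mp hrs with h | h
    · nlinarith [mul_self_nonneg s, (mul_self_pos).mpr h]
    · nlinarith [mul_self_nonneg r, (mul_self_pos).mpr h]
  nlinarith

/-- sign lemma: if `0 ≤ det A B` and `det B C ≤ 0` with `B ≠ 0`, then
`0` is not interior to the triangle. -/
lemma sign_lemma (A B C : ℤ × ℤ) (hB : B ≠ 0)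
    (h1 : 0 ≤ detI A B) (h2 : detI B C ≤ 0) :
    (0 : ℚ × ℚ) ∉ interior (convexHull ℚ {toQ A, toQ B, toQ C}) := by
  apply not_mem_interior_halfspace (B.2 : ℚ) (-(B.1 : ℚ))
  · rintro ⟨hb2, hb1⟩
    apply hB
    have : (B.1 : ℚ) = 0 := by linarith [neg_eq_zero.mp hb1]
    have e1 : B.1 = 0 := by exact_mod_cast this
    have e2 : B.2 = 0 := by exact_mod_cast hb2
    exact Prod.ext e1 e2
  · apply convexHull_min ?_ (halfspace_convex _ _)
    rintro z hz
    simp only [Set.mem_insert_iff, Set.mem_singleton_iff] at hz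
    rcases hz with rfl | rfl | rfl
    · show (0:ℚ) ≤ (B.2:ℚ) * (A.1:ℚ) + -(B.1:ℚ) * (A.2:ℚ)
      have : (0:ℚ) ≤ ((detI A B : ℤ) : ℚ) := by exact_mod_cast h1
      simp only [detI] at this; push_cast at this ⊢; linarith
    · show (0:ℚ) ≤ (B.2:ℚ) * (B.1:ℚ) + -(B.1:ℚ) * (B.2:ℚ)
      ring_nf; exact le_refl 0
    · show (0:ℚ) ≤ (B.2:ℚ) * (C.1:ℚ) + -(B.1:ℚ) * (C.2:ℚ)
      have : ((detI B C : ℤ) : ℚ) ≤ 0 := by exact_mod_cast h2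
      simp only [detI] at this; push_cast at this ⊢; linarith




/-- the linear map on `ℚ²` given by an integer matrix. -/
def mulQ (ma mb mc md : ℤ) : (ℚ × ℚ) →ₗ[ℚ] (ℚ × ℚ) where
  toFun x := ((ma : ℚ) * x.1 + (mb : ℚ) * x.2, (mc : ℚ) * x.1 + (md : ℚ) * x.2)
  map_add' x y := by
    simp only [Prod.fst_add, Prod.snd_add, Prod.mk_add_mk, Prod.mk.injEq]
    constructor <;> ring
  map_smul' c x := by
    simp only [Prod.smul_fst, Prod.smul_snd, smul_eq_mul, RingHom.id_apply,
      Prod.smul_mk, Prod.mk.injEq]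
    constructor <;> ring

lemma gcd_unimod (ma mb mc md b1 b2 : ℤ) (hdet : ma * md - mb * mc = 1)
    (hb : Int.gcd b1 b2 = 1) :
    Int.gcd (ma * b1 + mb * b2) (mc * b1 + md * b2) = 1 := by
  have h1 : (Int.gcd (ma * b1 + mb * b2) (mc * b1 + md * b2) : ℤ) ∣ b1 := by
    have e : b1 = md * (ma * b1 + mb * b2) - mb * (mc * b1 + md * b2) := by
      linear_combination (-b1) * hdet
    have d : (Int.gcd (ma * b1 + mb * b2) (mc * b1 + md * b2) : ℤ) ∣
        md * (ma * b1 + mb * b2) - mb * (mc * b1 + md * b2) :=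
      dvd_sub (Dvd.dvd.mul_left (Int.gcd_dvd_left _ _) md)
        (Dvd.dvd.mul_left (Int.gcd_dvd_right _ _) mb)
    rwa [← e] at d
  have h2 : (Int.gcd (ma * b1 + mb * b2) (mc * b1 + md * b2) : ℤ) ∣ b2 := by
    have e : b2 = (-mc) * (ma * b1 + mb * b2) + ma * (mc * b1 + md * b2) := by
      linear_combination (-b2) * hdet
    have d : (Int.gcd (ma * b1 + mb * b2) (mc * b1 + md * b2) : ℤ) ∣
        (-mc) * (ma * b1 + mb * b2) + ma * (mc * b1 + md * b2) :=
      dvd_add (Dvd.dvd.mul_left (Int.gcd_dvd_left _ _) _)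
        (Dvd.dvd.mul_left (Int.gcd_dvd_right _ _) ma)
    rwa [← e] at d
  have h3 : (Int.gcd (ma * b1 + mb * b2) (mc * b1 + md * b2) : ℤ) ∣
      (Int.gcd b1 b2 : ℤ) := Int.dvd_coe_gcd h1 h2
  rw [hb] at h3
  exact Nat.dvd_one.mp (by exact_mod_cast h3)

/-- The key normal-form lemma. -/
lemma key (Q T : Set (ℚ × ℚ)) (A B C : ℤ × ℤ)
    (hA : Int.gcd A.1 A.2 = 1) (hB : Int.gcd B.1 B.2 = 1) (hC : Int.gcd C.1 C.2 = 1)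
    (hT : T = convexHull ℚ {toQ A, toQ B, toQ C})
    (h3 : 0 < detI A B) (h1 : 0 < detI B C) (h2 : 0 < detI C A)
    (h13 : detI B C ≤ detI A B) (h23 : detI C A ≤ detI A B)
    (hvol : (detI A B : ℝ) + 2 ≤ nVol Q) :
    ∃ p q x y : ℤ,
      Int.gcd p q = 1 ∧ Int.gcd x y = 1 ∧
      0 ≤ p ∧ p < q ∧ (q : ℝ) ≤ nVol Q - 2 ∧
      -q ≤ y ∧ y < 0 ∧ y * p - q ≤ x * q ∧ x * q < y * p ∧
      UnimodEquiv T (convexHull ℚ {toQ (1, 0), toQ (p, q), toQ (x, y)}) := by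
  obtain ⟨u, v, huv⟩ := (Int.isCoprime_iff_gcd_eq_one.mpr hA)
  obtain ⟨q, hqdef⟩ : ∃ t : ℤ, t = detI A B := ⟨_, rfl⟩
  obtain ⟨p0, hp0def⟩ : ∃ t : ℤ, t = u * B.1 + v * B.2 := ⟨_, rfl⟩
  obtain ⟨k, hkdef⟩ : ∃ t : ℤ, t = -(p0 / q) := ⟨_, rfl⟩
  obtain ⟨ma, hmadef⟩ : ∃ t : ℤ, t = u + k * (-A.2) := ⟨_, rfl⟩
  obtain ⟨mb, hmbdef⟩ : ∃ t : ℤ, t = v + k * A.1 := ⟨_, rfl⟩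
  obtain ⟨mc, hmcdef⟩ : ∃ t : ℤ, t = -A.2 := ⟨_, rfl⟩
  obtain ⟨md, hmddef⟩ : ∃ t : ℤ, t = A.1 := ⟨_, rfl⟩
  obtain ⟨p, hpdef⟩ : ∃ t : ℤ, t = ma * B.1 + mb * B.2 := ⟨_, rfl⟩
  obtain ⟨x, hxdef⟩ : ∃ t : ℤ, t = ma * C.1 + mb * C.2 := ⟨_, rfl⟩
  obtain ⟨y, hydef⟩ : ∃ t : ℤ, t = mc * C.1 + md * C.2 := ⟨_, rfl⟩
  have hdet : ma * md - mb * mc = 1 := by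
    rw [hmadef, hmbdef, hmcdef, hmddef]; linear_combination huv
  have hq : mc * B.1 + md * B.2 = q := by
    rw [hmcdef, hmddef, hqdef]; simp only [detI]; ring
  have hqpos : 0 < q := by rw [hqdef]; exact h3
  have hy : y = -(detI C A) := by
    rw [hydef, hmcdef, hmddef]; simp only [detI]; ring
  have hpk : p = p0 + k * q := by
    rw [hpdef, hmadef, hmbdef, ← hq, hmcdef, hmddef, hp0def]; ring
  have hp : p = p0 % q := by
    rw [hpk, hkdef, Int.emod_def]; ring
  have hp0q : 0 ≤ p := hp ▸ Int.emod_nonneg _ (ne_of_gt hqpos)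
  have hpq : p < q := hp ▸ Int.emod_lt_of_pos _ hqpos
  have hdBC : p * y - q * x = detI B C := by
    rw [hpdef, hxdef, hydef, ← hq, hmadef, hmbdef, hmcdef, hmddef]
    simp only [detI]
    linear_combination (B.1 * C.2 - B.2 * C.1) * huv
  refine ⟨p, q, x, y, ?_, ?_, hp0q, hpq, by rw [hqdef]; linarith, ?_, ?_, ?_, ?_, ?_⟩
  · rw [← hq, hpdef]; exact gcd_unimod ma mb mc md B.1 B.2 hdet hB
  · rw [hxdef, hydef]; exact gcd_unimod ma mb mc md C.1 C.2 hdet hC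
  · rw [hy, hqdef]; omega
  · rw [hy]; omega
  · have e1 := mul_comm y p
    have e2 := mul_comm x q
    have e3 : detI B C ≤ q := by rw [hqdef]; exact h13
    linarith [hdBC]
  · have e1 := mul_comm y p
    have e2 := mul_comm x q
    linarith [hdBC, h1]
  · refine ⟨ma, mb, mc, md, Or.inl hdet, ?_⟩
    have hfun : (fun z : ℚ × ℚ => ((ma : ℚ) * z.1 + (mb : ℚ) * z.2,
        (mc : ℚ) * z.1 + (md : ℚ) * z.2)) = ⇑(mulQ ma mb mc md) := rfl
    rw [hT, hfun, LinearMap.image_convexHull]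
    congr 1
    have hMA1 : ma * A.1 + mb * A.2 = 1 := by
      rw [hmadef, hmbdef]; linear_combination huv
    have hMA2 : mc * A.1 + md * A.2 = 0 := by rw [hmcdef, hmddef]; ring
    have eA : mulQ ma mb mc md (toQ A) = toQ (1, 0) := by
      simp only [mulQ, LinearMap.coe_mk, AddHom.coe_mk, toQ, Prod.mk.injEq]
      constructor
      · exact_mod_cast congrArg (fun n : ℤ => (n : ℚ)) hMA1
      · exact_mod_cast congrArg (fun n : ℤ => (n : ℚ)) hMA2
    have eB : mulQ ma mb mc md (toQ B) = toQ (p, q) := by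
      simp only [mulQ, LinearMap.coe_mk, AddHom.coe_mk, toQ, Prod.mk.injEq]
      constructor
      · rw [hpdef]; push_cast; ring
      · exact_mod_cast congrArg (fun n : ℤ => (n : ℚ)) hq
    have eC : mulQ ma mb mc md (toQ C) = toQ (x, y) := by
      simp only [mulQ, LinearMap.coe_mk, AddHom.coe_mk, toQ, Prod.mk.injEq]
      constructor
      · rw [hxdef]; push_cast; ring
      · rw [hydef]; push_cast; ring
    rw [Set.image_insert_eq, Set.image_insert_eq, Set.image_singleton, eA, eB, eC]




lemma comb_mem {K : Type*} [Field K] [LinearOrder K] [IsStrictOrderedRing K] {E : Type*} [AddCommGroup E] [Module K E]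
    (u v w : E) {α β γ : K} (hα : 0 ≤ α) (hβ : 0 ≤ β) (hγ : 0 ≤ γ) (hsum : α + β + γ = 1) :
    α • u + β • v + γ • w ∈ convexHull K ({u, v, w} : Set E) := by
  have h := (convex_convexHull K ({u, v, w} : Set E)).sum_mem
    (t := (Finset.univ : Finset (Fin 3))) (w := ![α, β, γ]) (z := ![u, v, w])
    (fun i _ => by fin_cases i <;> simpa)
    (by simp [Fin.sum_univ_three, hsum])
    (fun i _ => by
      fin_cases i <;> simp <;> apply subset_convexHull <;> simp)
  simpa [Fin.sum_univ_three] using h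

/-- the standard triangle. -/
def T0 : Set (ℝ × ℝ) := {p | 0 ≤ p.1 ∧ 0 ≤ p.2 ∧ p.1 + p.2 ≤ 1}

lemma T0_convex : Convex ℝ T0 := by
  intro x hx y hy a b ha hb hab
  obtain ⟨hx1, hx2, hx3⟩ := hx
  obtain ⟨hy1, hy2, hy3⟩ := hy
  have h1 : (a • x + b • y).1 = a * x.1 + b * y.1 := rfl
  have h2 : (a • x + b • y).2 = a * x.2 + b * y.2 := rfl
  refine ⟨?_, ?_, ?_⟩
  · rw [h1]; nlinarith
  · rw [h2]; nlinarith
  · rw [h1, h2]; nlinarith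

lemma T0_closed : IsClosed T0 := by
  have : T0 = {p : ℝ × ℝ | 0 ≤ p.1} ∩ ({p | 0 ≤ p.2} ∩ {p | p.1 + p.2 ≤ 1}) := by
    ext p; simp [T0, Set.mem_setOf_eq, and_assoc]
  rw [this]
  exact (isClosed_le continuous_const continuous_fst).inter
    ((isClosed_le continuous_const continuous_snd).inter
      (isClosed_le (continuous_fst.add continuous_snd) continuous_const))

lemma T0_eq : convexHull ℝ ({(0 : ℝ × ℝ), (1, 0), (0, 1)} : Set (ℝ × ℝ)) = T0 := by
  apply le_antisymm
  · apply convexHull_min ?_ T0_convex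
    rintro z hz
    simp only [Set.mem_insert_iff, Set.mem_singleton_iff] at hz
    rcases hz with rfl | rfl | rfl <;> constructor <;> norm_num
  · intro p hp
    obtain ⟨h1, h2, h3⟩ := hp
    have he : (1 - p.1 - p.2) • (0 : ℝ × ℝ) + p.1 • ((1 : ℝ), (0 : ℝ))
        + p.2 • ((0 : ℝ), (1 : ℝ)) = p := by
      apply Prod.ext <;> simp
    rw [← he]
    exact comb_mem _ _ _ (by linarith) h1 h2 (by ring)

lemma vol_T0 : volume T0 = ENNReal.ofReal (1 / 2) := by
  have hmeas : MeasurableSet T0 := T0_closed.measurableSet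
  rw [Measure.volume_eq_prod ℝ ℝ, Measure.prod_apply hmeas]
  have hslice : ∀ x : ℝ, volume (Prod.mk x ⁻¹' T0)
      = Set.indicator (Set.Icc (0:ℝ) 1) (fun x => ENNReal.ofReal (1 - x)) x := by
    intro x
    by_cases hx : x ∈ Set.Icc (0:ℝ) 1
    · obtain ⟨hx0, hx1⟩ := hx
      have : Prod.mk x ⁻¹' T0 = Set.Icc 0 (1 - x) := by
        ext y
        simp only [Set.mem_preimage, T0, Set.mem_setOf_eq, Set.mem_Icc]
        constructor
        · rintro ⟨_, hy2, hy3⟩; exact ⟨hy2, by linarith⟩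
        · rintro ⟨hy2, hy3⟩; exact ⟨hx0, hy2, by linarith⟩
      rw [this, Real.volume_Icc, Set.indicator_of_mem (Set.mem_Icc.mpr ⟨hx0, hx1⟩)]
      norm_num
    · have : Prod.mk x ⁻¹' T0 = ∅ := by
        apply Set.eq_empty_iff_forall_notMem.mpr
        intro y hy
        obtain ⟨h0, h2, h3⟩ := hy
        exact hx ⟨h0, by linarith⟩
      rw [this, Set.indicator_of_notMem hx]
      simp
  rw [lintegral_congr hslice, lintegral_indicator measurableSet_Icc]
  have hint : IntegrableOn (fun x : ℝ => 1 - x) (Set.Icc 0 1) :=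
    (continuous_const.sub continuous_id).integrableOn_Icc
  have hpos : 0 ≤ᵐ[volume.restrict (Set.Icc (0:ℝ) 1)] fun x => 1 - x :=
    (ae_restrict_iff' measurableSet_Icc).mpr
      (Filter.Eventually.of_forall fun x hx => by
        simp only [Set.mem_Icc] at hx
        simp only [Pi.zero_apply]
        linarith [hx.2])
  rw [← ofReal_integral_eq_lintegral_ofReal hint hpos]
  congr 1
  rw [MeasureTheory.integral_Icc_eq_integral_Ioc,
    ← intervalIntegral.integral_of_le (by norm_num : (0:ℝ) ≤ 1),
    intervalIntegral.integral_sub intervalIntegrable_const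
      intervalIntegral.intervalIntegrable_id]
  simp
  norm_num

/-- triangle from the origin: volume formula. -/
lemma vol_tri (u v : ℝ × ℝ) :
    volume (convexHull ℝ ({(0 : ℝ × ℝ), u, v} : Set (ℝ × ℝ)))
      = ENNReal.ofReal (|u.1 * v.2 - u.2 * v.1| / 2) := by
  set L := Matrix.toLin (Module.Basis.finTwoProd ℝ) (Module.Basis.finTwoProd ℝ) !![u.1, v.1; u.2, v.2] with hL
  have hdet : LinearMap.det L = u.1 * v.2 - u.2 * v.1 := by
    rw [hL, LinearMap.det_toLin]
    simp [Matrix.det_fin_two_of]; ring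
  have h1 : L ((1 : ℝ), (0 : ℝ)) = u := by
    rw [hL, Matrix.toLin_finTwoProd_apply]
    simp
  have h2 : L ((0 : ℝ), (1 : ℝ)) = v := by
    rw [hL, Matrix.toLin_finTwoProd_apply]
    simp
  have him : ⇑L '' ({(0 : ℝ × ℝ), (1, 0), (0, 1)} : Set (ℝ × ℝ)) = {0, u, v} := by
    rw [Set.image_insert_eq, Set.image_insert_eq, Set.image_singleton, map_zero, h1, h2]
  calc volume (convexHull ℝ ({(0 : ℝ × ℝ), u, v} : Set (ℝ × ℝ)))
      = volume (⇑L '' convexHull ℝ ({(0 : ℝ × ℝ), (1, 0), (0, 1)} : Set (ℝ × ℝ))) := by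
        rw [L.image_convexHull, him]
    _ = ENNReal.ofReal |LinearMap.det L| * volume (convexHull ℝ
          ({(0 : ℝ × ℝ), (1, 0), (0, 1)} : Set (ℝ × ℝ))) :=
        Measure.addHaar_image_linearMap volume L _
    _ = ENNReal.ofReal (|u.1 * v.2 - u.2 * v.1| / 2) := by
        rw [T0_eq, vol_T0, hdet, ← ENNReal.ofReal_mul (abs_nonneg _), mul_one_div]

lemma line_null (r s : ℝ) (hrs : ¬(r = 0 ∧ s = 0)) :
    volume {z : ℝ × ℝ | r * z.1 + s * z.2 = 0} = 0 := by
  have hset : {z : ℝ × ℝ | r * z.1 + s * z.2 = 0}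
      = (Submodule.span ℝ {((-s, r) : ℝ × ℝ)} : Set (ℝ × ℝ)) := by
    ext z
    simp only [Set.mem_setOf_eq, SetLike.mem_coe, Submodule.mem_span_singleton]
    constructor
    · intro hz
      by_cases hs : s = 0
      · have hr : r ≠ 0 := fun h => hrs ⟨h, hs⟩
        refine ⟨z.2 / r, ?_⟩
        have hz1 : z.1 = 0 := by
          have hrz : r * z.1 = 0 := by rw [hs] at hz; linarith
          exact (mul_eq_zero.mp hrz).resolve_left hr
        have hsm : (z.2 / r) • ((-s, r) : ℝ × ℝ) = (z.2 / r * (-s), z.2 / r * r) := rfl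
        rw [hsm]
        rw [Prod.ext_iff]
        constructor
        · simp [hs, hz1]
        · simp only; field_simp
      · refine ⟨-(z.1 / s), ?_⟩
        have hsm : (-(z.1 / s)) • ((-s, r) : ℝ × ℝ)
            = (-(z.1 / s) * (-s), -(z.1 / s) * r) := rfl
        rw [hsm, Prod.ext_iff]
        constructor
        · simp only; field_simp
        · simp only; field_simp; linear_combination -hz
    · rintro ⟨c, rfl⟩
      have hsm : c • ((-s, r) : ℝ × ℝ) = (c * (-s), c * r) := rfl
      rw [hsm]
      simp only
      ring
  rw [hset]
  apply Measure.addHaar_submodule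
  intro htop
  have h1 : ((1 : ℝ), (0 : ℝ)) ∈ Submodule.span ℝ {((-s, r) : ℝ × ℝ)} := htop ▸ trivial
  have h2 : ((0 : ℝ), (1 : ℝ)) ∈ Submodule.span ℝ {((-s, r) : ℝ × ℝ)} := htop ▸ trivial
  rw [Submodule.mem_span_singleton] at h1 h2
  obtain ⟨a, ha⟩ := h1
  obtain ⟨b, hb⟩ := h2
  have ha1 : a * (-s) = 1 := congrArg Prod.fst ha
  have ha2 : a * r = 0 := congrArg Prod.snd ha
  have hb1 : b * (-s) = 0 := congrArg Prod.fst hb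
  have hb2 : b * r = 1 := congrArg Prod.snd hb
  have : a ≠ 0 := fun h => by simp [h] at ha1
  have hr : r = 0 := by
    rcases mul_eq_zero.mp ha2 with h | h
    · exact absurd h this
    · exact h
  rw [hr] at hb2
  simp at hb2

lemma tri_sub_halfspace (P1 P2 P3 : ℝ × ℝ) (r s : ℝ)
    (h1 : 0 ≤ r * P1.1 + s * P1.2) (h2 : 0 ≤ r * P2.1 + s * P2.2)
    (h3 : 0 ≤ r * P3.1 + s * P3.2) :
    convexHull ℝ ({P1, P2, P3} : Set (ℝ × ℝ)) ⊆ {z : ℝ × ℝ | 0 ≤ r * z.1 + s * z.2} := by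
  apply convexHull_min ?_ (halfspace_convex r s)
  rintro z hz
  simp only [Set.mem_insert_iff, Set.mem_singleton_iff] at hz
  rcases hz with rfl | rfl | rfl <;> assumption

lemma inter_null (S1 S2 : Set (ℝ × ℝ)) (r s : ℝ) (hrs : ¬(r = 0 ∧ s = 0))
    (h1 : S1 ⊆ {z : ℝ × ℝ | 0 ≤ r * z.1 + s * z.2})
    (h2 : S2 ⊆ {z : ℝ × ℝ | 0 ≤ (-r) * z.1 + (-s) * z.2}) :
    volume (S1 ∩ S2) = 0 := by
  apply measure_mono_null ?_ (line_null r s hrs)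
  rintro z ⟨hz1, hz2⟩
  have := h1 hz1
  have := h2 hz2
  simp only [Set.mem_setOf_eq] at *
  linarith

/-- `ℚ`-scalar action on `ℝ²` agrees with cast. -/
lemma qsmulR (q : ℚ) (v : ℝ × ℝ) : q • v = (q : ℝ) • v := by
  apply Prod.ext
  · show q • v.1 = (q : ℝ) * v.1
    rw [Rat.smul_def]
  · show q • v.2 = (q : ℝ) * v.2
    rw [Rat.smul_def]

/-- the coercion `ℚ² → ℝ²` as a `ℚ`-linear map. -/
def imRL : (ℚ × ℚ) →ₗ[ℚ] (ℝ × ℝ) where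
  toFun x := ((x.1 : ℝ), (x.2 : ℝ))
  map_add' x y := by
    simp only [Prod.fst_add, Prod.snd_add, Prod.mk_add_mk, Prod.mk.injEq]
    constructor <;> push_cast <;> ring
  map_smul' c x := by
    simp only [Prod.smul_fst, Prod.smul_snd, smul_eq_mul, RingHom.id_apply, qsmulR,
      Prod.smul_mk]
    push_cast
    rfl

lemma closure_convex_of_ratConvex (s : Set (ℝ × ℝ))
    (hs : ∀ t : ℚ, 0 ≤ t → t ≤ 1 → ∀ x ∈ s, ∀ y ∈ s,
      (t : ℝ) • x + (1 - (t : ℝ)) • y ∈ s) :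
    Convex ℝ (closure s) := by
  intro x hx y hy a b ha hb hab
  have hb' : b = 1 - a := by linarith
  subst hb'
  -- rational combinations of closure points are in the closure
  have step1 : ∀ t : ℚ, 0 ≤ t → t ≤ 1 →
      (t : ℝ) • x + (1 - (t : ℝ)) • y ∈ closure s := by
    intro t ht0 ht1
    have hg : Continuous (fun p : (ℝ × ℝ) × (ℝ × ℝ) =>
        (t : ℝ) • p.1 + (1 - (t : ℝ)) • p.2) :=
      by fun_prop
    have hmaps : (fun p : (ℝ × ℝ) × (ℝ × ℝ) =>
        (t : ℝ) • p.1 + (1 - (t : ℝ)) • p.2) '' (s ×ˢ s) ⊆ s := by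
      rintro _ ⟨⟨p1, p2⟩, ⟨hp1, hp2⟩, rfl⟩
      exact hs t ht0 ht1 p1 hp1 p2 hp2
    have hxy : (x, y) ∈ closure (s ×ˢ s) := by
      rw [closure_prod_eq]
      exact ⟨hx, hy⟩
    have hmem := (image_closure_subset_closure_image hg) (Set.mem_image_of_mem _ hxy)
    exact closure_mono hmaps hmem
  rcases eq_or_lt_of_le ha with heq | ha'
  · simp only [← heq, zero_smul, zero_add, sub_zero, one_smul]
    exact hy
  rcases eq_or_lt_of_le (by linarith : a ≤ 1) with heq | ha1
  · simp only [heq, one_smul, sub_self, zero_smul, add_zero]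
    exact hx
  -- now 0 < a < 1
  have hdense : Set.Ioo (0:ℝ) 1 ⊆ closure (Set.Ioo (0:ℝ) 1 ∩ Set.range ((↑) : ℚ → ℝ)) :=
    Rat.denseRange_cast.open_subset_closure_inter isOpen_Ioo
  have hcont : Continuous (fun t : ℝ => t • x + (1 - t) • y) :=
    (continuous_id.smul continuous_const).add
      ((continuous_const.sub continuous_id).smul continuous_const)
  have hmem : a ∈ closure (Set.Ioo (0:ℝ) 1 ∩ Set.range ((↑) : ℚ → ℝ)) :=
    hdense ⟨ha', ha1⟩
  have himg : (fun t : ℝ => t • x + (1 - t) • y) ''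
      (Set.Ioo (0:ℝ) 1 ∩ Set.range ((↑) : ℚ → ℝ)) ⊆ closure s := by
    rintro _ ⟨t, ⟨⟨ht0, ht1⟩, ⟨tq, rfl⟩⟩, rfl⟩
    exact step1 tq (by exact_mod_cast ht0.le) (by exact_mod_cast ht1.le)
  have := (image_closure_subset_closure_image hcont) (Set.mem_image_of_mem _ hmem)
  have h2 := closure_mono himg this
  rwa [closure_closure] at h2

lemma imRL_toQ (A : ℤ × ℤ) : imRL (toQ A) = ((A.1 : ℝ), (A.2 : ℝ)) := by
  show (((A.1 : ℚ) : ℝ), ((A.2 : ℚ) : ℝ)) = ((A.1 : ℝ), (A.2 : ℝ))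
  push_cast
  rfl

lemma vol_bound (Q : Set (ℚ × ℚ)) (S : Finset (ℤ × ℤ))
    (hQdef : Q = convexHull ℚ (toQ '' (S : Set (ℤ × ℤ))))
    (A B C : ℤ × ℤ) (hAQ : toQ A ∈ Q) (hBQ : toQ B ∈ Q) (hCQ : toQ C ∈ Q)
    (h3 : 0 < detI A B) (h1 : 0 < detI B C) (h2 : 0 < detI C A) :
    (detI A B : ℝ) + 2 ≤ nVol Q := by
  have hfun : (fun x : ℚ × ℚ => ((x.1 : ℝ), (x.2 : ℝ))) = ⇑imRL := rfl
  set rA : ℝ × ℝ := ((A.1 : ℝ), (A.2 : ℝ)) with hrAdef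
  set rB : ℝ × ℝ := ((B.1 : ℝ), (B.2 : ℝ)) with hrBdef
  set rC : ℝ × ℝ := ((C.1 : ℝ), (C.2 : ℝ)) with hrCdef
  set d1 : ℝ := (detI B C : ℝ) with hd1
  set d2 : ℝ := (detI C A : ℝ) with hd2
  set d3 : ℝ := (detI A B : ℝ) with hd3
  have hd1pos : 0 < d1 := by rw [hd1]; exact_mod_cast h1
  have hd2pos : 0 < d2 := by rw [hd2]; exact_mod_cast h2
  have hd3pos : 0 < d3 := by rw [hd3]; exact_mod_cast h3
  have hd1one : 1 ≤ d1 := by rw [hd1]; exact_mod_cast h1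
  have hd2one : 1 ≤ d2 := by rw [hd2]; exact_mod_cast h2
  set K : Set (ℝ × ℝ) := closure (⇑imRL '' Q) with hK
  have hconvQ : Convex ℚ Q := hQdef ▸ convex_convexHull ℚ _
  have hKconv : Convex ℝ K := by
    apply closure_convex_of_ratConvex
    intro t ht0 ht1 x hx y hy
    obtain ⟨xq, hxq, rfl⟩ := hx
    obtain ⟨yq, hyq, rfl⟩ := hy
    have he : (t : ℝ) • imRL xq + (1 - (t : ℝ)) • imRL yq
        = imRL (t • xq + (1 - t) • yq) := by
      rw [map_add, LinearMap.map_smul, LinearMap.map_smul, qsmulR, qsmulR]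
      push_cast
      ring_nf
    rw [he]
    exact Set.mem_image_of_mem _
      (hconvQ hxq hyq ht0 (by linarith) (by ring))
  have hrAK : rA ∈ K := subset_closure ⟨toQ A, hAQ, imRL_toQ A⟩
  have hrBK : rB ∈ K := subset_closure ⟨toQ B, hBQ, imRL_toQ B⟩
  have hrCK : rC ∈ K := subset_closure ⟨toQ C, hCQ, imRL_toQ C⟩
  have hhullK : convexHull ℝ ({rA, rB, rC} : Set (ℝ × ℝ)) ⊆ K := by
    apply convexHull_min ?_ hKconv
    rintro z hz
    simp only [Set.mem_insert_iff, Set.mem_singleton_iff] at hz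
    rcases hz with rfl | rfl | rfl <;> assumption
  -- 0 is in the real triangle
  have hssum : 0 < d1 + d2 + d3 := by linarith
  have h0mem : (0 : ℝ × ℝ) ∈ convexHull ℝ ({rA, rB, rC} : Set (ℝ × ℝ)) := by
    have hc := comb_mem rA rB rC (α := d1 / (d1 + d2 + d3)) (β := d2 / (d1 + d2 + d3))
      (γ := d3 / (d1 + d2 + d3)) (by positivity) (by positivity) (by positivity)
      (by field_simp)
    have he : (d1 / (d1 + d2 + d3)) • rA + (d2 / (d1 + d2 + d3)) • rB
        + (d3 / (d1 + d2 + d3)) • rC = (0 : ℝ × ℝ) := by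
      have e1 : d1 * (A.1 : ℝ) + d2 * (B.1 : ℝ) + d3 * (C.1 : ℝ) = 0 := by
        rw [hd1, hd2, hd3]; push_cast [detI]; ring
      have e2 : d1 * (A.2 : ℝ) + d2 * (B.2 : ℝ) + d3 * (C.2 : ℝ) = 0 := by
        rw [hd1, hd2, hd3]; push_cast [detI]; ring
      rw [hrAdef, hrBdef, hrCdef, Prod.ext_iff]
      simp only [Prod.smul_mk, smul_eq_mul, Prod.mk_add_mk, Prod.fst_zero, Prod.snd_zero]
      constructor
      · field_simp
        linear_combination e1
      · field_simp
        linear_combination e2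
    rw [← he]
    exact hc
  -- the three subtriangles
  have tsub : ∀ P R : ℝ × ℝ, P ∈ ({rA, rB, rC} : Set (ℝ × ℝ)) →
      R ∈ ({rA, rB, rC} : Set (ℝ × ℝ)) →
      convexHull ℝ ({0, P, R} : Set (ℝ × ℝ)) ⊆ convexHull ℝ ({rA, rB, rC} : Set (ℝ × ℝ)) := by
    intro P R hP hR
    apply convexHull_min ?_ (convex_convexHull ℝ _)
    rintro z hz
    simp only [Set.mem_insert_iff, Set.mem_singleton_iff] at hz
    rcases hz with rfl | rfl | rfl
    · exact h0mem
    · exact subset_convexHull ℝ _ hP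
    · exact subset_convexHull ℝ _ hR
  -- volumes of the subtriangles
  have harg1 : rA.1 * rB.2 - rA.2 * rB.1 = d3 := by
    rw [hrAdef, hrBdef, hd3]; push_cast [detI]; ring
  have harg2 : rB.1 * rC.2 - rB.2 * rC.1 = d1 := by
    rw [hrBdef, hrCdef, hd1]; push_cast [detI]; ring
  have harg3 : rC.1 * rA.2 - rC.2 * rA.1 = d2 := by
    rw [hrCdef, hrAdef, hd2]; push_cast [detI]; ring
  have hv1 : volume (convexHull ℝ ({0, rA, rB} : Set (ℝ × ℝ))) = ENNReal.ofReal (d3 / 2) := by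
    rw [vol_tri, harg1, abs_of_pos hd3pos]
  have hv2 : volume (convexHull ℝ ({0, rB, rC} : Set (ℝ × ℝ))) = ENNReal.ofReal (d1 / 2) := by
    rw [vol_tri, harg2, abs_of_pos hd1pos]
  have hv3 : volume (convexHull ℝ ({0, rC, rA} : Set (ℝ × ℝ))) = ENNReal.ofReal (d2 / 2) := by
    rw [vol_tri, harg3, abs_of_pos hd2pos]
  -- pairwise a.e. disjointness
  have hd3' : 0 < rA.1 * rB.2 - rA.2 * rB.1 := harg1 ▸ hd3pos
  have hd1' : 0 < rB.1 * rC.2 - rB.2 * rC.1 := harg2 ▸ hd1pos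
  have hd2' : 0 < rC.1 * rA.2 - rC.2 * rA.1 := harg3 ▸ hd2pos
  have d12 : volume (convexHull ℝ ({0, rA, rB} : Set (ℝ × ℝ))
      ∩ convexHull ℝ ({0, rB, rC} : Set (ℝ × ℝ))) = 0 := by
    apply inter_null _ _ (rB.2) (-rB.1)
    · rintro ⟨e1, e2⟩
      rw [e1] at hd3'
      have : rB.1 = 0 := by linarith [neg_eq_zero.mp e2]
      rw [this] at hd3'
      simp at hd3' 
    · apply tri_sub_halfspace
      · norm_num
      · have e : rB.2 * rA.1 + -rB.1 * rA.2 = rA.1 * rB.2 - rA.2 * rB.1 := by ring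
        rw [e]
        linarith
      · have e : rB.2 * rB.1 + -rB.1 * rB.2 = 0 := by ring
        rw [e]
    · simp only [neg_neg]
      apply tri_sub_halfspace
      · norm_num
      · have e : -rB.2 * rB.1 + rB.1 * rB.2 = 0 := by ring
        rw [e]
      · have e : -rB.2 * rC.1 + rB.1 * rC.2 = rB.1 * rC.2 - rB.2 * rC.1 := by ring
        rw [e]
        linarith
  have d13 : volume (convexHull ℝ ({0, rA, rB} : Set (ℝ × ℝ))
      ∩ convexHull ℝ ({0, rC, rA} : Set (ℝ × ℝ))) = 0 := by
    apply inter_null _ _ (-rA.2) (rA.1)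
    · rintro ⟨e1, e2⟩
      have h1' : rA.2 = 0 := by linarith [neg_eq_zero.mp e1]
      rw [h1', e2] at hd3'
      simp at hd3' 
    · apply tri_sub_halfspace
      · norm_num
      · have e : -rA.2 * rA.1 + rA.1 * rA.2 = 0 := by ring
        rw [e]
      · have e : -rA.2 * rB.1 + rA.1 * rB.2 = rA.1 * rB.2 - rA.2 * rB.1 := by ring
        rw [e]
        linarith
    · simp only [neg_neg]
      apply tri_sub_halfspace
      · norm_num
      · have e : rA.2 * rC.1 + -rA.1 * rC.2 = rC.1 * rA.2 - rC.2 * rA.1 := by ring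
        rw [e]
        linarith
      · have e : rA.2 * rA.1 + -rA.1 * rA.2 = 0 := by ring
        rw [e]
  have d23 : volume (convexHull ℝ ({0, rB, rC} : Set (ℝ × ℝ))
      ∩ convexHull ℝ ({0, rC, rA} : Set (ℝ × ℝ))) = 0 := by
    apply inter_null _ _ (rC.2) (-rC.1)
    · rintro ⟨e1, e2⟩
      have h1' : rC.1 = 0 := by linarith [neg_eq_zero.mp e2]
      rw [e1, h1'] at hd2'
      simp at hd2'
    · apply tri_sub_halfspace
      · norm_num
      · have e : rC.2 * rB.1 + -rC.1 * rB.2 = rB.1 * rC.2 - rB.2 * rC.1 := by ring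
        rw [e]
        linarith
      · have e : rC.2 * rC.1 + -rC.1 * rC.2 = 0 := by ring
        rw [e]
    · simp only [neg_neg]
      apply tri_sub_halfspace
      · norm_num
      · have e : -rC.2 * rC.1 + rC.1 * rC.2 = 0 := by ring
        rw [e]
      · have e : -rC.2 * rA.1 + rC.1 * rA.2 = rC.1 * rA.2 - rC.2 * rA.1 := by ring
        rw [e]
        linarith
  -- measurability
  have hfin1 : ({(0 : ℝ × ℝ), rA, rB} : Set (ℝ × ℝ)).Finite :=
    (Set.finite_singleton rB).insert rA |>.insert 0
  have hfin2 : ({(0 : ℝ × ℝ), rB, rC} : Set (ℝ × ℝ)).Finite :=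
    (Set.finite_singleton rC).insert rB |>.insert 0
  have hfin3 : ({(0 : ℝ × ℝ), rC, rA} : Set (ℝ × ℝ)).Finite :=
    (Set.finite_singleton rA).insert rC |>.insert 0
  have hm2 : NullMeasurableSet (convexHull ℝ ({0, rB, rC} : Set (ℝ × ℝ))) volume :=
    (hfin2.isCompact_convexHull ℝ).isClosed.measurableSet.nullMeasurableSet
  have hm3 : NullMeasurableSet (convexHull ℝ ({0, rC, rA} : Set (ℝ × ℝ))) volume :=
    (hfin3.isCompact_convexHull ℝ).isClosed.measurableSet.nullMeasurableSet
  have e12 : volume (convexHull ℝ ({0, rA, rB} : Set (ℝ × ℝ))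
      ∪ convexHull ℝ ({0, rB, rC} : Set (ℝ × ℝ)))
      = volume (convexHull ℝ ({0, rA, rB} : Set (ℝ × ℝ)))
        + volume (convexHull ℝ ({0, rB, rC} : Set (ℝ × ℝ))) :=
    measure_union₀ hm2 d12
  have ed3 : MeasureTheory.AEDisjoint volume
      (convexHull ℝ ({0, rA, rB} : Set (ℝ × ℝ)) ∪ convexHull ℝ ({0, rB, rC} : Set (ℝ × ℝ)))
      (convexHull ℝ ({0, rC, rA} : Set (ℝ × ℝ))) := by
    show volume _ = 0
    rw [Set.union_inter_distrib_right]
    exact measure_union_null d13 d23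
  have e123 : volume ((convexHull ℝ ({0, rA, rB} : Set (ℝ × ℝ))
      ∪ convexHull ℝ ({0, rB, rC} : Set (ℝ × ℝ)))
      ∪ convexHull ℝ ({0, rC, rA} : Set (ℝ × ℝ)))
      = ENNReal.ofReal ((d1 + d2 + d3) / 2) := by
    rw [measure_union₀ hm3 ed3, e12, hv1, hv2, hv3,
      ← ENNReal.ofReal_add (by positivity) (by positivity),
      ← ENNReal.ofReal_add (by positivity) (by positivity)]
    congr 1
    ring
  -- all of it is inside K
  have hsubK : (convexHull ℝ ({0, rA, rB} : Set (ℝ × ℝ))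
      ∪ convexHull ℝ ({0, rB, rC} : Set (ℝ × ℝ)))
      ∪ convexHull ℝ ({0, rC, rA} : Set (ℝ × ℝ)) ⊆ K := by
    apply Set.union_subset (Set.union_subset ?_ ?_) ?_
    · exact (tsub rA rB (by simp) (by simp)).trans hhullK
    · exact (tsub rB rC (by simp) (by simp)).trans hhullK
    · exact (tsub rC rA (by simp) (by simp)).trans hhullK
  have hofle : ENNReal.ofReal ((d1 + d2 + d3) / 2) ≤ volume K := by
    rw [← e123]
    exact measure_mono hsubK
  -- K has finite volume
  have hXfin : ((⇑imRL '' (toQ '' (S : Set (ℤ × ℤ)))) : Set (ℝ × ℝ)).Finite :=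
    ((S.finite_toSet.image toQ).image _)
  have hQsub : ⇑imRL '' Q ⊆ convexHull ℝ (⇑imRL '' (toQ '' (S : Set (ℤ × ℤ)))) := by
    rw [hQdef]
    have hpre : convexHull ℚ (toQ '' (S : Set (ℤ × ℤ)))
        ⊆ ⇑imRL ⁻¹' (convexHull ℝ (⇑imRL '' (toQ '' (S : Set (ℤ × ℤ))))) := by
      apply convexHull_min
      · intro g hg
        exact subset_convexHull ℝ _ (Set.mem_image_of_mem _ hg)
      · have hQc : Convex ℚ (convexHull ℝ (⇑imRL '' (toQ '' (S : Set (ℤ × ℤ))))) := by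
          intro x hx y hy a b ha hb hab
          rw [qsmulR, qsmulR]
          exact (convex_convexHull ℝ _) hx hy (by exact_mod_cast ha) (by exact_mod_cast hb)
            (by exact_mod_cast congrArg (fun q : ℚ => (q : ℝ)) hab)
        exact hQc.linear_preimage imRL
    intro z hz
    obtain ⟨w, hw, rfl⟩ := hz
    exact hpre hw
  have hKfin : volume K ≠ ⊤ := by
    have hcl : K ⊆ convexHull ℝ (⇑imRL '' (toQ '' (S : Set (ℤ × ℤ)))) :=
      closure_minimal hQsub (hXfin.isCompact_convexHull ℝ).isClosed
    exact ne_top_of_le_ne_top (hXfin.isCompact_convexHull ℝ).measure_lt_top.ne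
      (measure_mono hcl)
  have htoReal := ENNReal.toReal_mono hKfin hofle
  rw [ENNReal.toReal_ofReal (by positivity)] at htoReal
  have hnVol : nVol Q = 2 * (volume K).toReal := by
    rw [nVol, hfun, hK]
  rw [hnVol]
  linarith


end LDPaux

/-- Any LDP-sub-triangle `T` of an LDP-polygon `Q` is unimodularly equivalent to a
triangle with vertices `(1,0)`, `(p,q)`, `(x,y)` satisfying `gcd(p,q) = 1`,
`gcd(x,y) = 1`, `0 ≤ p < q ≤ Vol(Q) − 2`, `−q ≤ y < 0`, and `yp − q ≤ xq < yp`. -/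
theorem ldp_sub_triangle_normal_form
    (Q T : Set (ℚ × ℚ)) (hQ : IsLDPPolygon Q)
    (v₁ v₂ v₃ : ℚ × ℚ) (hv₁ : v₁ ∈ vertices Q) (hv₂ : v₂ ∈ vertices Q)
    (hv₃ : v₃ ∈ vertices Q) (hT : T = convexHull ℚ {v₁, v₂, v₃})
    (h0 : (0 : ℚ × ℚ) ∈ interior T) :
    ∃ p q x y : ℤ,
      Int.gcd p q = 1 ∧ Int.gcd x y = 1 ∧
      0 ≤ p ∧ p < q ∧ (q : ℝ) ≤ nVol Q - 2 ∧
      -q ≤ y ∧ y < 0 ∧ y * p - q ≤ x * q ∧ x * q < y * p ∧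
      UnimodEquiv T (convexHull ℚ {toQ (1, 0), toQ (p, q), toQ (x, y)}) := by
  obtain ⟨⟨⟨⟨S, hQdef⟩, -⟩, -⟩, hvert⟩ := hQ
  obtain ⟨a, hag, hva⟩ := hvert v₁ hv₁
  obtain ⟨b, hbg, hvb⟩ := hvert v₂ hv₂
  obtain ⟨c, hcg, hvc⟩ := hvert v₃ hv₃
  have haQ : toQ a ∈ Q := hva ▸ hv₁.1
  have hbQ : toQ b ∈ Q := hvb ▸ hv₂.1
  have hcQ : toQ c ∈ Q := hvc ▸ hv₃.1
  have hT' : T = convexHull ℚ {toQ a, toQ b, toQ c} := by rw [hT, hva, hvb, hvc]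
  have h0' : (0 : ℚ × ℚ) ∈ interior (convexHull ℚ {toQ a, toQ b, toQ c}) := by
    rw [← hT']; exact h0
  have hane : a ≠ 0 := by
    intro h; rw [h] at hag; simp [Int.gcd] at hag
  have hbne : b ≠ 0 := by
    intro h; rw [h] at hbg; simp [Int.gcd] at hbg
  have hcne : c ≠ 0 := by
    intro h; rw [h] at hcg; simp [Int.gcd] at hcg
  have H : ∀ X Y Z : ℤ × ℤ, ({toQ X, toQ Y, toQ Z} : Set (ℚ × ℚ)) = {toQ a, toQ b, toQ c} →
      Y ≠ 0 → 0 ≤ LDPaux.detI X Y → LDPaux.detI Y Z ≤ 0 → False := by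
    intro X Y Z hset hY hd1 hd2
    exact LDPaux.sign_lemma X Y Z hY hd1 hd2 (by rw [hset]; exact h0')
  have pbca : ({toQ b, toQ c, toQ a} : Set (ℚ × ℚ)) = {toQ a, toQ b, toQ c} := by
    ext w; simp only [Set.mem_insert_iff, Set.mem_singleton_iff]; tauto
  have pcab : ({toQ c, toQ a, toQ b} : Set (ℚ × ℚ)) = {toQ a, toQ b, toQ c} := by
    ext w; simp only [Set.mem_insert_iff, Set.mem_singleton_iff]; tauto
  have pbac : ({toQ b, toQ a, toQ c} : Set (ℚ × ℚ)) = {toQ a, toQ b, toQ c} := by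
    ext w; simp only [Set.mem_insert_iff, Set.mem_singleton_iff]; tauto
  have pacb : ({toQ a, toQ c, toQ b} : Set (ℚ × ℚ)) = {toQ a, toQ b, toQ c} := by
    ext w; simp only [Set.mem_insert_iff, Set.mem_singleton_iff]; tauto
  have pcba : ({toQ c, toQ b, toQ a} : Set (ℚ × ℚ)) = {toQ a, toQ b, toQ c} := by
    ext w; simp only [Set.mem_insert_iff, Set.mem_singleton_iff]; tauto
  rcases le_total 0 (LDPaux.detI a b) with hab | hab
  · have hbc : 0 < LDPaux.detI b c := lt_of_not_ge fun hle => H a b c rfl hbne hab hle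
    have hca : 0 < LDPaux.detI c a := lt_of_not_ge fun hle => H b c a pbca hcne hbc.le hle
    have hab' : 0 < LDPaux.detI a b := lt_of_not_ge fun hle => H c a b pcab hane hca.le hle
    rcases le_total (LDPaux.detI b c) (LDPaux.detI a b) with h1 | h1
    · rcases le_total (LDPaux.detI c a) (LDPaux.detI a b) with h2 | h2
      · exact LDPaux.key Q T a b c hag hbg hcg hT' hab' hbc hca h1 h2
          (LDPaux.vol_bound Q S hQdef a b c haQ hbQ hcQ hab' hbc hca)
      · exact LDPaux.key Q T c a b hcg hag hbg (by rw [hT', ← pcab]) hca hab' hbc h2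
          (h1.trans h2) (LDPaux.vol_bound Q S hQdef c a b hcQ haQ hbQ hca hab' hbc)
    · rcases le_total (LDPaux.detI c a) (LDPaux.detI b c) with h2 | h2
      · exact LDPaux.key Q T b c a hbg hcg hag (by rw [hT', ← pbca]) hbc hca hab' h2 h1
          (LDPaux.vol_bound Q S hQdef b c a hbQ hcQ haQ hbc hca hab')
      · exact LDPaux.key Q T c a b hcg hag hbg (by rw [hT', ← pcab]) hca hab' hbc
          (h1.trans h2) h2 (LDPaux.vol_bound Q S hQdef c a b hcQ haQ hbQ hca hab' hbc)
  · have hba0 : 0 ≤ LDPaux.detI b a := by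
      have : LDPaux.detI b a = -LDPaux.detI a b := by simp only [LDPaux.detI]; ring
      rw [this]; linarith
    have hac : 0 < LDPaux.detI a c := lt_of_not_ge fun hle => H b a c pbac hane hba0 hle
    have hcb : 0 < LDPaux.detI c b := lt_of_not_ge fun hle => H a c b pacb hcne hac.le hle
    have hba : 0 < LDPaux.detI b a := lt_of_not_ge fun hle => H c b a pcba hbne hcb.le hle
    rcases le_total (LDPaux.detI a c) (LDPaux.detI b a) with h1 | h1
    · rcases le_total (LDPaux.detI c b) (LDPaux.detI b a) with h2 | h2
      · exact LDPaux.key Q T b a c hbg hag hcg (by rw [hT', ← pbac]) hba hac hcb h1 h2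
          (LDPaux.vol_bound Q S hQdef b a c hbQ haQ hcQ hba hac hcb)
      · exact LDPaux.key Q T c b a hcg hbg hag (by rw [hT', ← pcba]) hcb hba hac h2
          (h1.trans h2) (LDPaux.vol_bound Q S hQdef c b a hcQ hbQ haQ hcb hba hac)
    · rcases le_total (LDPaux.detI c b) (LDPaux.detI a c) with h2 | h2
      · exact LDPaux.key Q T a c b hag hcg hbg (by rw [hT', ← pacb]) hac hcb hba h2 h1
          (LDPaux.vol_bound Q S hQdef a c b haQ hcQ hbQ hac hcb hba)
      · exact LDPaux.key Q T c b a hcg hbg hag (by rw [hT', ← pcba]) hcb hba hac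
          (h1.trans h2) h2 (LDPaux.vol_bound Q S hQdef c b a hcQ hbQ haQ hcb hba hac)
end
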